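/- arXiv:1302.0954 — 6 statements merged into one kernel-verified Lean document; each statement's English description precedes it below -/
import Mathlib

section
/- Let (μ_n) be finite Borel measures on [0,1] converging weakly to a finite Borel measure μ, and let s > 0 be such that the energies ∬ |x − y|^{−s} dμ_n(x) dμ_n(y) are uniformly bounded in n. Then for every t with 0 < t < s, ∬ |x − y|^{−t} dμ_n(x) dμ_n(y) → ∬ |x − y|^{−t} dμ(x) dμ(y) as n → ∞. -/
open MeasureTheory Filter Set Topology
open scoped ENNReal

set_option synthInstance.maxHeartbeats 1000000
set_option maxHeartbeats 1000000

namespace Stmt4Aux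

noncomputable def phi (r ε u : ℝ) : ℝ := (max |u| ε) ^ (-r)

lemma phi_cont (r : ℝ) {ε : ℝ} (hε : 0 < ε) : Continuous (phi r ε) := by
  apply Continuous.rpow_const (continuous_abs.max continuous_const)
  intro x
  exact Or.inl (by positivity)

lemma phi_nonneg (r ε u : ℝ) : 0 ≤ phi r ε u :=
  Real.rpow_nonneg (le_trans (abs_nonneg u) (le_max_left _ _)) _

lemma phi_le {r ε : ℝ} (hr : 0 < r) (hε : 0 < ε) (u : ℝ) : phi r ε u ≤ ε ^ (-r) :=
  Real.rpow_le_rpow_of_nonpos hε (le_max_right _ _) (by linarith)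

lemma ofReal_phi_le {r ε : ℝ} (hr : 0 < r) (hε : 0 < ε) (u : ℝ) :
    ENNReal.ofReal (phi r ε u) ≤ (ENNReal.ofReal |u|) ^ (-r) := by
  rcases eq_or_lt_of_le (abs_nonneg u) with h | h
  · rw [← h, ENNReal.ofReal_zero, ENNReal.zero_rpow_of_neg (by linarith)]
    exact le_top
  · rw [ENNReal.ofReal_rpow_of_pos h]
    exact ENNReal.ofReal_le_ofReal
      (Real.rpow_le_rpow_of_nonpos h (le_max_left _ _) (by linarith))

lemma kernel_le {s t ε : ℝ} (ht : 0 < t) (hts : t < s) (hε : 0 < ε) (u : ℝ) :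
    (ENNReal.ofReal |u|) ^ (-t) ≤
      ENNReal.ofReal (phi t ε u) + ENNReal.ofReal (ε ^ (s - t)) * (ENNReal.ofReal |u|) ^ (-s) := by
  rcases eq_or_lt_of_le (abs_nonneg u) with h | h
  · rw [← h, ENNReal.ofReal_zero, ENNReal.zero_rpow_of_neg (by linarith : (-s:ℝ) < 0),
      ENNReal.mul_top (by simp [hε, (by positivity : (0:ℝ) < ε ^ (s - t))] ), add_top]
    exact le_top
  rcases le_or_gt ε |u| with hd | hd
  · have : phi t ε u = |u| ^ (-t) := by rw [phi, max_eq_left hd]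
    rw [ENNReal.ofReal_rpow_of_pos h, this]
    exact le_add_right le_rfl
  · have h1 : |u| ^ (-t) ≤ ε ^ (s - t) * |u| ^ (-s) := by
      have : |u| ^ (-t) = |u| ^ (s - t) * |u| ^ (-s) := by
        rw [← Real.rpow_add h]; ring_nf
      rw [this]
      exact mul_le_mul_of_nonneg_right
        (Real.rpow_le_rpow (abs_nonneg u) hd.le (by linarith)) (Real.rpow_nonneg h.le _)
    calc (ENNReal.ofReal |u|) ^ (-t) = ENNReal.ofReal (|u| ^ (-t)) :=
          ENNReal.ofReal_rpow_of_pos h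
      _ ≤ ENNReal.ofReal (ε ^ (s - t) * |u| ^ (-s)) := ENNReal.ofReal_le_ofReal h1
      _ = ENNReal.ofReal (ε ^ (s - t)) * ENNReal.ofReal (|u| ^ (-s)) :=
          ENNReal.ofReal_mul (by positivity)
      _ = ENNReal.ofReal (ε ^ (s - t)) * (ENNReal.ofReal |u|) ^ (-s) := by
          rw [ENNReal.ofReal_rpow_of_pos h]
      _ ≤ _ := le_add_self

lemma sup_phi {r : ℝ} (hr : 0 < r) (u : ℝ) :
    ⨆ k : ℕ, ENNReal.ofReal (phi r (1 / (k + 1)) u) = (ENNReal.ofReal |u|) ^ (-r) := by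
  apply le_antisymm
  · exact iSup_le fun k => ofReal_phi_le hr (by positivity) u
  rcases eq_or_lt_of_le (abs_nonneg u) with h | h
  · -- |u| = 0 : RHS = ⊤, show iSup = ⊤
    rw [← h, ENNReal.ofReal_zero, ENNReal.zero_rpow_of_neg (by linarith)]
    rw [top_le_iff, iSup_eq_top]
    intro b hb
    have htend : Tendsto (fun k : ℕ => ((k : ℝ) + 1) ^ r) atTop atTop :=
      (tendsto_rpow_atTop hr).comp (tendsto_natCast_atTop_atTop.atTop_add tendsto_const_nhds)
    obtain ⟨k, hk⟩ := (htend.eventually_gt_atTop b.toReal).exists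
    refine ⟨k, ?_⟩
    have hu : |u| = 0 := h.symm
    have hphi : phi r (1 / ((k:ℝ) + 1)) u = ((k:ℝ) + 1) ^ r := by
      have hpos : (0:ℝ) ≤ (k:ℝ) + 1 := by positivity
      simp only [phi]
      rw [hu, max_eq_right (by positivity : (0:ℝ) ≤ 1/((k:ℝ)+1)), one_div,
        Real.inv_rpow hpos, Real.rpow_neg hpos, inv_inv]
    rw [hphi, ENNReal.lt_ofReal_iff_toReal_lt hb.ne]
    exact hk
  · obtain ⟨k, hk⟩ := exists_nat_one_div_lt h
    refine le_trans ?_ (le_iSup _ k)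
    have hphi : phi r (1 / ((k:ℝ) + 1)) u = |u| ^ (-r) := by
      simp only [phi, max_eq_left hk.le]
    rw [ENNReal.ofReal_rpow_of_pos h, hphi]



lemma phi_mono {r : ℝ} (hr : 0 < r) (u : ℝ) :
    Monotone (fun k : ℕ => ENNReal.ofReal (phi r (1 / (k + 1)) u)) := by
  intro k k' hkk'
  apply ENNReal.ofReal_le_ofReal
  apply Real.rpow_le_rpow_of_nonpos
  · have : (0:ℝ) < 1 / ((k':ℝ) + 1) := by positivity
    exact lt_max_of_lt_right this
  · apply max_le_max le_rfl
    apply one_div_le_one_div_of_le (by positivity)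
    have : (k:ℝ) ≤ (k':ℝ) := Nat.cast_le.mpr hkk'
    linarith
  · linarith

lemma phi_meas {r ε : ℝ} (hε : 0 < ε) :
    Measurable fun p : ℝ × ℝ => ENNReal.ofReal (phi r ε (p.1 - p.2)) :=
  (ENNReal.continuous_ofReal.comp
    ((phi_cont r hε).comp (continuous_fst.sub continuous_snd))).measurable

lemma lint_eq_sup {r : ℝ} (hr : 0 < r) (ν : Measure (ℝ × ℝ)) :
    ∫⁻ p : ℝ × ℝ, (ENNReal.ofReal |p.1 - p.2|) ^ (-r) ∂ν
      = ⨆ k : ℕ, ∫⁻ p : ℝ × ℝ, ENNReal.ofReal (phi r (1 / (k + 1)) (p.1 - p.2)) ∂ν := by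
  rw [← lintegral_iSup (fun k => phi_meas (by positivity)) (fun k k' h p => phi_mono hr _ h)]
  exact lintegral_congr fun p => (sup_phi hr _).symm

lemma ae_box {ν : Measure ℝ} [IsFiniteMeasure ν] (hν : ν (Set.Icc (0:ℝ) 1)ᶜ = 0) :
    ∀ᵐ p : ℝ × ℝ ∂ν.prod ν, p.1 ∈ Set.Icc (0:ℝ) 1 ∧ p.2 ∈ Set.Icc (0:ℝ) 1 := by
  rw [MeasureTheory.ae_iff]
  apply measure_mono_null (t := (Set.Icc (0:ℝ) 1)ᶜ ×ˢ (univ : Set ℝ) ∪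
    (univ : Set ℝ) ×ˢ (Set.Icc (0:ℝ) 1)ᶜ)
  · intro p hp
    simp only [Set.mem_setOf_eq, not_and_or] at hp
    rcases hp with hp | hp
    · exact Or.inl ⟨hp, trivial⟩
    · exact Or.inr ⟨trivial, hp⟩
  · apply measure_union_null <;> rw [Measure.prod_prod, hν] <;> simp

lemma integrable_box {ν : Measure ℝ} [IsFiniteMeasure ν] (hν : ν (Set.Icc (0:ℝ) 1)ᶜ = 0)
    {f : ℝ × ℝ → ℝ} (hf : Continuous f) {C : ℝ}
    (hC : ∀ p : ℝ × ℝ, p.1 ∈ Set.Icc (0:ℝ) 1 → p.2 ∈ Set.Icc (0:ℝ) 1 → |f p| ≤ C) :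
    Integrable f (ν.prod ν) := by
  refine ⟨hf.aestronglyMeasurable, HasFiniteIntegral.of_bounded (C := C) ?_⟩
  filter_upwards [ae_box hν] with p hp
  simpa [Real.norm_eq_abs] using hC p hp.1 hp.2


lemma integrable_sub_pow {ν : Measure ℝ} [IsFiniteMeasure ν] (hν : ν (Set.Icc (0:ℝ) 1)ᶜ = 0)
    (k : ℕ) : Integrable (fun p : ℝ × ℝ => (p.1 - p.2) ^ k) (ν.prod ν) := by
  apply integrable_box hν (by continuity) (C := 1)
  intro p h1 h2
  rw [abs_pow]
  apply pow_le_one₀ (abs_nonneg _)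
  rw [abs_sub_le_iff]
  simp only [Set.mem_Icc] at h1 h2
  constructor <;> linarith [h1.1, h1.2, h2.1, h2.2]

lemma integral_sub_pow {ν : Measure ℝ} [IsFiniteMeasure ν] (hν : ν (Set.Icc (0:ℝ) 1)ᶜ = 0)
    (k : ℕ) :
    ∫ p : ℝ × ℝ, (p.1 - p.2) ^ k ∂ν.prod ν
      = ∑ i ∈ Finset.range (k + 1),
          (∫ x, x ^ i ∂ν) * ((∫ x, (-x) ^ (k - i) ∂ν) * (k.choose i : ℝ)) := by
  have expand : ∀ p : ℝ × ℝ, (p.1 - p.2) ^ k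
      = ∑ i ∈ Finset.range (k + 1), p.1 ^ i * ((-p.2) ^ (k - i) * (k.choose i : ℝ)) := by
    intro p
    rw [sub_eq_add_neg, add_pow]
    exact Finset.sum_congr rfl fun i _ => by ring
  rw [integral_congr_ae (ae_of_all _ expand), integral_finset_sum]
  · refine Finset.sum_congr rfl fun i _ => ?_
    rw [integral_prod_mul (μ := ν) (ν := ν) (fun x => x ^ i)
      (fun y => (-y) ^ (k - i) * (k.choose i : ℝ)), integral_mul_const]
  · intro i _
    apply integrable_box hν (by continuity) (C := (k.choose i : ℝ))
    intro p h1 h2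
    simp only [Set.mem_Icc] at h1 h2
    rw [abs_mul, abs_mul, abs_pow, abs_pow, abs_neg, Nat.abs_cast]
    have e1 : |p.1| ^ i ≤ 1 := pow_le_one₀ (abs_nonneg _) (abs_le.mpr ⟨by linarith [h1.1], by linarith [h1.2]⟩)
    have e2 : |p.2| ^ (k - i) ≤ 1 := pow_le_one₀ (abs_nonneg _) (abs_le.mpr ⟨by linarith [h2.1], by linarith [h2.2]⟩)
    calc |p.1| ^ i * (|p.2| ^ (k - i) * (k.choose i : ℝ))
        ≤ 1 * (1 * (k.choose i : ℝ)) := by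
          apply mul_le_mul e1 _ (by positivity) one_pos.le
          apply mul_le_mul e2 le_rfl (by positivity) one_pos.le
      _ = (k.choose i : ℝ) := by ring

lemma exists_poly_approx (φ : ℝ → ℝ) (hφ : Continuous φ) {η : ℝ} (hη : 0 < η) :
    ∃ q : Polynomial ℝ, ∀ u ∈ Set.Icc (-1:ℝ) 1, |φ u - q.eval u| ≤ η := by
  set f : C(Set.Icc (-1:ℝ) 1, ℝ) := ⟨fun u => φ u, hφ.comp continuous_subtype_val⟩
  have hf : f ∈ closure ((polynomialFunctions (Set.Icc (-1:ℝ) 1)) : Set C(Set.Icc (-1:ℝ) 1, ℝ)) := by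
    have h := polynomialFunctions_closure_eq_top (-1 : ℝ) 1
    have : f ∈ (polynomialFunctions (Set.Icc (-1:ℝ) 1)).topologicalClosure := by
      rw [h]; trivial
    exact this
  obtain ⟨g, hg_mem, hg⟩ := Metric.mem_closure_iff.mp hf η hη
  rw [polynomialFunctions_coe] at hg_mem
  obtain ⟨q, rfl⟩ := hg_mem
  refine ⟨q, fun u hu => ?_⟩
  have := ContinuousMap.dist_apply_le_dist (f := f) (g := Polynomial.toContinuousMapOnAlgHom _ q) ⟨u, hu⟩
  have h2 : dist (f ⟨u, hu⟩) ((Polynomial.toContinuousMapOnAlgHom _ q) ⟨u, hu⟩) ≤ η :=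
    this.trans hg.le
  simpa [f, Real.dist_eq, Polynomial.toContinuousMapOnAlgHom,
    Polynomial.toContinuousMapOn, Polynomial.toContinuousMap] using h2

lemma sub_mem_Icc {a b : ℝ} (h1 : a ∈ Set.Icc (0:ℝ) 1) (h2 : b ∈ Set.Icc (0:ℝ) 1) :
    a - b ∈ Set.Icc (-1:ℝ) 1 := by
  simp only [Set.mem_Icc] at *
  constructor <;> linarith [h1.1, h1.2, h2.1, h2.2]

lemma integral_q {ν : Measure ℝ} [IsFiniteMeasure ν] (hν : ν (Set.Icc (0:ℝ) 1)ᶜ = 0)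
    (q : Polynomial ℝ) :
    ∫ p : ℝ × ℝ, q.eval (p.1 - p.2) ∂ν.prod ν
      = ∑ i ∈ Finset.range (q.natDegree + 1),
          q.coeff i * ∫ p : ℝ × ℝ, (p.1 - p.2) ^ i ∂ν.prod ν := by
  have expand : ∀ p : ℝ × ℝ, q.eval (p.1 - p.2)
      = ∑ i ∈ Finset.range (q.natDegree + 1), q.coeff i * (p.1 - p.2) ^ i := fun p =>
    q.eval_eq_sum_range _
  rw [integral_congr_ae (ae_of_all _ expand), integral_finset_sum]
  · exact Finset.sum_congr rfl fun i _ => integral_const_mul _ _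
  · exact fun i _ => (integrable_sub_pow hν i).const_mul _

section Conv

variable {μn : ℕ → Measure ℝ} {μ : Measure ℝ} [IsFiniteMeasure μ]
  (hfin : ∀ n, IsFiniteMeasure (μn n))
  (hsupp : ∀ n, μn n (Set.Icc (0:ℝ) 1)ᶜ = 0)
  (hsupp' : μ (Set.Icc (0:ℝ) 1)ᶜ = 0)
  (hweak : ∀ f : ℝ → ℝ, Continuous f →
    Tendsto (fun n => ∫ x, f x ∂(μn n)) atTop (𝓝 (∫ x, f x ∂μ)))

include hweak in
lemma mass_tendsto : Tendsto (fun n => ((μn n) univ).toReal) atTop (𝓝 ((μ univ).toReal)) := by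
  have := hweak (fun _ => (1:ℝ)) continuous_const
  simpa [integral_const, measureReal_def] using this

include hfin hsupp hsupp' hweak in
lemma conv_pow (k : ℕ) :
    Tendsto (fun n => ∫ p : ℝ × ℝ, (p.1 - p.2) ^ k ∂(μn n).prod (μn n)) atTop
      (𝓝 (∫ p : ℝ × ℝ, (p.1 - p.2) ^ k ∂μ.prod μ)) := by
  have hn : ∀ n, ∫ p : ℝ × ℝ, (p.1 - p.2) ^ k ∂(μn n).prod (μn n)
      = ∑ i ∈ Finset.range (k + 1),
          (∫ x, x ^ i ∂(μn n)) * ((∫ x, (-x) ^ (k - i) ∂(μn n)) * (k.choose i : ℝ)) := fun n => by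
    haveI := hfin n; exact integral_sub_pow (hsupp n) k
  rw [integral_sub_pow hsupp' k]
  refine Tendsto.congr (fun n => (hn n).symm) ?_
  apply tendsto_finset_sum
  intro i _
  exact (hweak _ (by continuity)).mul ((hweak _ (by continuity)).mul tendsto_const_nhds)

include hfin hsupp hsupp' hweak in
lemma conv_phi (φ : ℝ → ℝ) (hφ : Continuous φ) :
    Tendsto (fun n => ∫ p : ℝ × ℝ, φ (p.1 - p.2) ∂(μn n).prod (μn n)) atTop
      (𝓝 (∫ p : ℝ × ℝ, φ (p.1 - p.2) ∂μ.prod μ)) := by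
  rw [Metric.tendsto_atTop]
  intro η hη
  obtain ⟨C0, hC0⟩ := (mass_tendsto hweak).bddAbove_range
  set C := max C0 ((μ univ).toReal) with hCdef
  have hCn : ∀ n, ((μn n) univ).toReal ≤ C := fun n =>
    le_trans (hC0 ⟨n, rfl⟩) (le_max_left _ _)
  have hCμ : (μ univ).toReal ≤ C := le_max_right _ _
  have hCpos : 0 ≤ C := le_trans ENNReal.toReal_nonneg hCμ
  set η' := η / (4 * (C ^ 2 + 1)) with hη'def
  have hη'pos : 0 < η' := by positivity
  obtain ⟨q, hq⟩ := exists_poly_approx φ hφ hη'pos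
  obtain ⟨Cφ, hCφ⟩ := (isCompact_Icc : IsCompact (Set.Icc (-1:ℝ) 1)).exists_bound_of_continuousOn
    hφ.continuousOn
  obtain ⟨Cq, hCq⟩ := (isCompact_Icc : IsCompact (Set.Icc (-1:ℝ) 1)).exists_bound_of_continuousOn
    (q.continuous_aeval).continuousOn
  have hq_conv : Tendsto (fun n => ∫ p : ℝ × ℝ, q.eval (p.1 - p.2) ∂(μn n).prod (μn n)) atTop
      (𝓝 (∫ p : ℝ × ℝ, q.eval (p.1 - p.2) ∂μ.prod μ)) := by
    have hn : ∀ n, ∫ p : ℝ × ℝ, q.eval (p.1 - p.2) ∂(μn n).prod (μn n)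
        = ∑ i ∈ Finset.range (q.natDegree + 1),
            q.coeff i * ∫ p : ℝ × ℝ, (p.1 - p.2) ^ i ∂(μn n).prod (μn n) := fun n => by
      haveI := hfin n; exact integral_q (hsupp n) q
    rw [integral_q hsupp' q]
    refine Tendsto.congr (fun n => (hn n).symm) ?_
    exact tendsto_finset_sum _ fun i _ =>
      (conv_pow hfin hsupp hsupp' hweak i).const_mul _
  obtain ⟨N, hN⟩ := Metric.tendsto_atTop.mp hq_conv (η / 2) (by positivity)
  refine ⟨N, fun n hn => ?_⟩
  have hbound : ∀ (ν : Measure ℝ) [IsFiniteMeasure ν], ν (Set.Icc (0:ℝ) 1)ᶜ = 0 →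
      (ν univ).toReal ≤ C →
      |(∫ p : ℝ × ℝ, φ (p.1 - p.2) ∂ν.prod ν) - ∫ p : ℝ × ℝ, q.eval (p.1 - p.2) ∂ν.prod ν|
        ≤ η' * C ^ 2 := by
    intro ν _ hν hmass
    have hintφ : Integrable (fun p : ℝ × ℝ => φ (p.1 - p.2)) (ν.prod ν) :=
      integrable_box hν (hφ.comp (continuous_fst.sub continuous_snd))
        (fun p h1 h2 => by
          have := hCφ _ (sub_mem_Icc h1 h2); rwa [Real.norm_eq_abs] at this)
    have hintq : Integrable (fun p : ℝ × ℝ => q.eval (p.1 - p.2)) (ν.prod ν) :=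
      integrable_box hν ((q.continuous_aeval).comp (continuous_fst.sub continuous_snd))
        (fun p h1 h2 => by
          have := hCq _ (sub_mem_Icc h1 h2); rwa [Real.norm_eq_abs] at this)
    rw [← integral_sub hintφ hintq]
    have hnorm := norm_integral_le_of_norm_le_const (μ := ν.prod ν) (C := η')
      (f := fun p : ℝ × ℝ => φ (p.1 - p.2) - q.eval (p.1 - p.2)) ?_
    · rw [Real.norm_eq_abs] at hnorm
      have hμuniv : ((ν.prod ν) univ).toReal = ((ν univ).toReal) ^ 2 := by
        rw [← univ_prod_univ, Measure.prod_prod, ENNReal.toReal_mul, sq]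
      refine hnorm.trans ?_
      rw [measureReal_def, hμuniv]
      have : ((ν univ).toReal) ^ 2 ≤ C ^ 2 := by
        apply pow_le_pow_left₀ ENNReal.toReal_nonneg hmass
      nlinarith [hη'pos.le]
    · filter_upwards [ae_box hν] with p hp
      rw [Real.norm_eq_abs]
      exact hq _ (sub_mem_Icc hp.1 hp.2)
  have h1 : |(∫ p : ℝ × ℝ, φ (p.1 - p.2) ∂(μn n).prod (μn n))
      - ∫ p : ℝ × ℝ, q.eval (p.1 - p.2) ∂(μn n).prod (μn n)| ≤ η' * C ^ 2 := by
    haveI := hfin n; exact hbound (μn n) (hsupp n) (hCn n)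
  have h2 : |(∫ p : ℝ × ℝ, φ (p.1 - p.2) ∂μ.prod μ)
      - ∫ p : ℝ × ℝ, q.eval (p.1 - p.2) ∂μ.prod μ| ≤ η' * C ^ 2 := hbound μ hsupp' hCμ
  have h3 := hN n hn
  rw [Real.dist_eq] at h3 ⊢
  have hkey : η' * C ^ 2 ≤ η / 4 := by
    rw [hη'def, div_mul_eq_mul_div, div_le_div_iff₀ (by positivity) (by norm_num)]
    nlinarith [hη.le, hCpos]
  have habs := abs_sub_le (∫ p : ℝ × ℝ, φ (p.1 - p.2) ∂(μn n).prod (μn n))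
    (∫ p : ℝ × ℝ, q.eval (p.1 - p.2) ∂(μn n).prod (μn n))
    (∫ p : ℝ × ℝ, φ (p.1 - p.2) ∂μ.prod μ)
  have habs2 := abs_sub_le (∫ p : ℝ × ℝ, q.eval (p.1 - p.2) ∂(μn n).prod (μn n))
    (∫ p : ℝ × ℝ, q.eval (p.1 - p.2) ∂μ.prod μ)
    (∫ p : ℝ × ℝ, φ (p.1 - p.2) ∂μ.prod μ)
  rw [abs_sub_comm] at h2
  linarith


include hfin hsupp hsupp' hweak in
lemma conv_lint {r : ℝ} (hr : 0 < r) {ε : ℝ} (hε : 0 < ε) :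
    Tendsto (fun n => ∫⁻ p : ℝ × ℝ, ENNReal.ofReal (phi r ε (p.1 - p.2)) ∂(μn n).prod (μn n))
      atTop (𝓝 (∫⁻ p : ℝ × ℝ, ENNReal.ofReal (phi r ε (p.1 - p.2)) ∂μ.prod μ)) := by
  have key : ∀ (ν : Measure ℝ) [IsFiniteMeasure ν],
      ∫⁻ p : ℝ × ℝ, ENNReal.ofReal (phi r ε (p.1 - p.2)) ∂ν.prod ν
        = ENNReal.ofReal (∫ p : ℝ × ℝ, phi r ε (p.1 - p.2) ∂ν.prod ν) := by
    intro ν _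
    rw [MeasureTheory.ofReal_integral_eq_lintegral_ofReal]
    · refine ⟨(((phi_cont r hε).comp (continuous_fst.sub continuous_snd))).aestronglyMeasurable,
        HasFiniteIntegral.of_bounded (C := ε ^ (-r)) (ae_of_all _ fun p => ?_)⟩
      rw [Real.norm_eq_abs, abs_of_nonneg (phi_nonneg _ _ _)]
      exact phi_le hr hε _
    · exact ae_of_all _ fun p => phi_nonneg _ _ _
  have h1 : ∀ n, ∫⁻ p : ℝ × ℝ, ENNReal.ofReal (phi r ε (p.1 - p.2)) ∂(μn n).prod (μn n)
      = ENNReal.ofReal (∫ p : ℝ × ℝ, phi r ε (p.1 - p.2) ∂(μn n).prod (μn n)) := fun n => by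
    haveI := hfin n; exact key _
  rw [key μ]
  refine Tendsto.congr (fun n => (h1 n).symm) ?_
  exact (ENNReal.continuous_ofReal.tendsto _).comp
    (conv_phi hfin hsupp hsupp' hweak _ (phi_cont r hε))

end Conv
end Stmt4Aux

theorem stmt4 (μn : ℕ → Measure ℝ) (μ : Measure ℝ)
    (hfin : ∀ n, IsFiniteMeasure (μn n)) [IsFiniteMeasure μ]
    (hsupp : ∀ n, μn n (Set.Icc (0 : ℝ) 1)ᶜ = 0)
    (hsupp' : μ (Set.Icc (0 : ℝ) 1)ᶜ = 0)
    (hweak : ∀ f : ℝ → ℝ, Continuous f →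
      Filter.Tendsto (fun n => ∫ x, f x ∂(μn n)) Filter.atTop (nhds (∫ x, f x ∂μ)))
    (s : ℝ) (hs : 0 < s)
    (hbdd : ∃ B : ℝ, ∀ n,
      ∫⁻ p : ℝ × ℝ, (ENNReal.ofReal |p.1 - p.2|) ^ (-s) ∂((μn n).prod (μn n)) ≤
        ENNReal.ofReal B)
    (t : ℝ) (ht0 : 0 < t) (hts : t < s) :
    Filter.Tendsto
      (fun n => ∫⁻ p : ℝ × ℝ, (ENNReal.ofReal |p.1 - p.2|) ^ (-t) ∂((μn n).prod (μn n)))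
      Filter.atTop
      (nhds (∫⁻ p : ℝ × ℝ, (ENNReal.ofReal |p.1 - p.2|) ^ (-t) ∂(μ.prod μ))) := by
  obtain ⟨B, hB⟩ := hbdd
  set BB := ENNReal.ofReal B with hBBdef
  have hBBne : BB ≠ ⊤ := ENNReal.ofReal_ne_top
  -- s-energy of μ is bounded by BB
  have hIs : ∫⁻ p : ℝ × ℝ, (ENNReal.ofReal |p.1 - p.2|) ^ (-s) ∂μ.prod μ ≤ BB := by
    rw [Stmt4Aux.lint_eq_sup hs]
    apply iSup_le
    intro k
    refine le_of_tendsto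
      (Stmt4Aux.conv_lint hfin hsupp hsupp' hweak hs (by positivity : (0:ℝ) < 1 / (k + 1)))
      (Eventually.of_forall fun n => ?_)
    exact le_trans (lintegral_mono fun p =>
      Stmt4Aux.ofReal_phi_le hs (by positivity) _) (hB n)
  -- upper bound: truncation plus tail
  have hub : ∀ (ν : Measure (ℝ × ℝ)) {ε : ℝ}, 0 < ε →
      ∫⁻ p : ℝ × ℝ, (ENNReal.ofReal |p.1 - p.2|) ^ (-t) ∂ν
        ≤ (∫⁻ p : ℝ × ℝ, ENNReal.ofReal (Stmt4Aux.phi t ε (p.1 - p.2)) ∂ν)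
          + ENNReal.ofReal (ε ^ (s - t)) *
            ∫⁻ p : ℝ × ℝ, (ENNReal.ofReal |p.1 - p.2|) ^ (-s) ∂ν := by
    intro ν ε hε
    calc ∫⁻ p : ℝ × ℝ, (ENNReal.ofReal |p.1 - p.2|) ^ (-t) ∂ν
        ≤ ∫⁻ p : ℝ × ℝ, (ENNReal.ofReal (Stmt4Aux.phi t ε (p.1 - p.2))
            + ENNReal.ofReal (ε ^ (s - t)) * (ENNReal.ofReal |p.1 - p.2|) ^ (-s)) ∂ν :=
          lintegral_mono fun p => Stmt4Aux.kernel_le ht0 hts hε _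
      _ = _ := by
          rw [lintegral_add_left (Stmt4Aux.phi_meas hε),
            lintegral_const_mul' _ _ ENNReal.ofReal_ne_top]
  -- lower bound
  have hlb : ∀ (ν : Measure (ℝ × ℝ)) {ε : ℝ}, 0 < ε →
      (∫⁻ p : ℝ × ℝ, ENNReal.ofReal (Stmt4Aux.phi t ε (p.1 - p.2)) ∂ν)
        ≤ ∫⁻ p : ℝ × ℝ, (ENNReal.ofReal |p.1 - p.2|) ^ (-t) ∂ν :=
    fun ν ε hε => lintegral_mono fun p => Stmt4Aux.ofReal_phi_le ht0 hε _
  -- finiteness of the limit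
  have hfinIt : ∫⁻ p : ℝ × ℝ, (ENNReal.ofReal |p.1 - p.2|) ^ (-t) ∂μ.prod μ ≠ ⊤ := by
    apply ne_top_of_le_ne_top
      (b := (∫⁻ p : ℝ × ℝ, ENNReal.ofReal (Stmt4Aux.phi t 1 (p.1 - p.2)) ∂μ.prod μ)
        + ENNReal.ofReal ((1:ℝ) ^ (s - t)) * BB)
    · apply ENNReal.add_ne_top.mpr
      constructor
      · apply ne_top_of_le_ne_top (b := ENNReal.ofReal ((1:ℝ) ^ (-t)) * (μ.prod μ) univ)
        · exact ENNReal.mul_ne_top ENNReal.ofReal_ne_top (measure_ne_top _ _)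
        · calc ∫⁻ p : ℝ × ℝ, ENNReal.ofReal (Stmt4Aux.phi t 1 (p.1 - p.2)) ∂μ.prod μ
              ≤ ∫⁻ _ : ℝ × ℝ, ENNReal.ofReal ((1:ℝ) ^ (-t)) ∂μ.prod μ :=
                lintegral_mono fun p =>
                  ENNReal.ofReal_le_ofReal (Stmt4Aux.phi_le ht0 one_pos _)
            _ = ENNReal.ofReal ((1:ℝ) ^ (-t)) * (μ.prod μ) univ := lintegral_const _
      · exact ENNReal.mul_ne_top ENNReal.ofReal_ne_top hBBne
    · exact le_trans (hub (μ.prod μ) one_pos)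
        (add_le_add_right (mul_le_mul_right hIs _) _)
  rw [ENNReal.tendsto_nhds hfinIt]
  intro δ hδ
  have hδ2 : (0 : ℝ≥0∞) < δ / 2 := ENNReal.half_pos hδ.ne'
  -- choose ε = 1/(k+1) with small tail
  have hc : Tendsto (fun k : ℕ => ENNReal.ofReal (((1:ℝ) / (k + 1)) ^ (s - t)) * BB)
      atTop (𝓝 0) := by
    have h0 : Tendsto (fun k : ℕ => ((1:ℝ) / (k + 1)) ^ (s - t)) atTop (𝓝 0) := by
      have hbase : Tendsto (fun k : ℕ => (1:ℝ) / (k + 1)) atTop (𝓝 0) :=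
        tendsto_one_div_add_atTop_nhds_zero_nat
      have hcont : ContinuousAt (fun x : ℝ => x ^ (s - t)) 0 :=
        Real.continuousAt_rpow_const 0 (s - t) (Or.inr (by linarith))
      have := hcont.tendsto.comp hbase
      rwa [Real.zero_rpow (by linarith : s - t ≠ 0)] at this
    have h1 : Tendsto (fun k : ℕ => ENNReal.ofReal (((1:ℝ) / (k + 1)) ^ (s - t)))
        atTop (𝓝 0) := by
      have := (ENNReal.continuous_ofReal.tendsto 0).comp h0
      rwa [ENNReal.ofReal_zero] at this
    have := ENNReal.Tendsto.mul_const (b := BB) h1 (Or.inr hBBne)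
    rwa [zero_mul] at this
  obtain ⟨k, hk⟩ := (hc.eventually_lt_const hδ2).exists
  set ε : ℝ := (1:ℝ) / (k + 1) with hεdef
  have hε : 0 < ε := by positivity
  set cB := ENNReal.ofReal (ε ^ (s - t)) with hcBdef
  set A := ∫⁻ p : ℝ × ℝ, ENNReal.ofReal (Stmt4Aux.phi t ε (p.1 - p.2)) ∂μ.prod μ with hAdef
  have hAne : A ≠ ⊤ := ne_top_of_le_ne_top hfinIt (hlb (μ.prod μ) hε)
  have hIcc := (ENNReal.tendsto_nhds hAne).mp
    (Stmt4Aux.conv_lint hfin hsupp hsupp' hweak ht0 hε) (δ / 2) hδ2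
  filter_upwards [hIcc] with n hn
  set J := ∫⁻ p : ℝ × ℝ, ENNReal.ofReal (Stmt4Aux.phi t ε (p.1 - p.2)) ∂(μn n).prod (μn n)
    with hJdef
  have hn1 : A ≤ J + δ / 2 := tsub_le_iff_right.mp hn.1
  have hn2 : J ≤ A + δ / 2 := hn.2
  constructor
  · -- lower bound
    rw [tsub_le_iff_right]
    calc ∫⁻ p : ℝ × ℝ, (ENNReal.ofReal |p.1 - p.2|) ^ (-t) ∂μ.prod μ
        ≤ A + cB * ∫⁻ p : ℝ × ℝ, (ENNReal.ofReal |p.1 - p.2|) ^ (-s) ∂μ.prod μ :=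
          hub (μ.prod μ) hε
      _ ≤ A + cB * BB := add_le_add_right (mul_le_mul_right hIs _) _
      _ ≤ (J + δ / 2) + δ / 2 := add_le_add hn1 hk.le
      _ = J + δ := by rw [add_assoc, ENNReal.add_halves]
      _ ≤ (∫⁻ p : ℝ × ℝ, (ENNReal.ofReal |p.1 - p.2|) ^ (-t) ∂(μn n).prod (μn n)) + δ :=
          add_le_add_left (hlb ((μn n).prod (μn n)) hε) _
  · calc ∫⁻ p : ℝ × ℝ, (ENNReal.ofReal |p.1 - p.2|) ^ (-t) ∂(μn n).prod (μn n)
        ≤ J + cB * ∫⁻ p : ℝ × ℝ, (ENNReal.ofReal |p.1 - p.2|) ^ (-s) ∂(μn n).prod (μn n) :=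
          hub ((μn n).prod (μn n)) hε
      _ ≤ J + cB * BB := add_le_add_right (mul_le_mul_right (hB n) _) _
      _ ≤ (A + δ / 2) + δ / 2 := add_le_add hn2 hk.le
      _ = A + δ := by rw [add_assoc, ENNReal.add_halves]
      _ ≤ (∫⁻ p : ℝ × ℝ, (ENNReal.ofReal |p.1 - p.2|) ^ (-t) ∂μ.prod μ) + δ :=
          add_le_add_left (hlb (μ.prod μ) hε) _
end

section
/- Let 0 < s < 1 and let h : [0,1] → ℝ be a non-negative measurable function such that the function R_s h(x) = ∫_0^1 |x − y|^{−s} h(y) dy is bounded. Let U ⊆ I ⊆ [0,1] be intervals with U non-degenerate, and assume that h does not vanish Lebesgue-almost everywhere on I. Then (1/|U|^s) ∫_U h(x) / R_s(h·χ_I)(x) dx ≤ 1, where R_s(h·χ_I)(x) = ∫_I |x − y|^{−s} h(y) dy. -/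
open MeasureTheory Filter Set
open scoped ENNReal

/-- `R_s(f·χ_I)(x) = ∫_I |x − y|^{−s} f(y) dy` for a non-negative `f`. -/
noncomputable def Rs (s : ℝ) (f : ℝ → ℝ) (I : Set ℝ) (x : ℝ) : ℝ :=
  (∫⁻ y in I, ENNReal.ofReal (|x - y| ^ (-s) * f y)).toReal

theorem stmt5 (s : ℝ) (hs0 : 0 < s) (hs1 : s < 1)
    (h : ℝ → ℝ) (hmeas : Measurable h) (hnn : ∀ x, 0 ≤ h x)
    (hbdd : ∃ B : ℝ, ∀ x ∈ Set.Icc (0 : ℝ) 1,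
      ∫⁻ y in Set.Icc (0 : ℝ) 1, ENNReal.ofReal (|x - y| ^ (-s) * h y) ≤ ENNReal.ofReal B)
    (u₁ u₂ i₁ i₂ : ℝ) (hU : u₁ < u₂)
    (hUI : Set.Icc u₁ u₂ ⊆ Set.Icc i₁ i₂)
    (hI : Set.Icc i₁ i₂ ⊆ Set.Icc (0 : ℝ) 1)
    (hnv : ¬ (∀ᵐ x ∂(volume.restrict (Set.Icc i₁ i₂)), h x = 0)) :
    (1 / (u₂ - u₁) ^ s) *
        ∫ x in Set.Icc u₁ u₂, h x / Rs s h (Set.Icc i₁ i₂) x ≤ 1 := by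
  obtain ⟨B, hB⟩ := hbdd
  set U : Set ℝ := Set.Icc u₁ u₂ with hUdef
  set I : Set ℝ := Set.Icc i₁ i₂ with hIdef
  have hUsub : U ⊆ Set.Icc (0 : ℝ) 1 := fun x hx => hI (hUI hx)
  have hlen : (0 : ℝ) < u₂ - u₁ := sub_pos.mpr hU
  set c : ℝ := (u₂ - u₁) ^ (-s) with hcdef
  have hc : 0 < c := Real.rpow_pos_of_pos hlen _
  set A : ℝ≥0∞ := ∫⁻ y in U, ENNReal.ofReal (h y) with hAdef
  set L : ℝ → ℝ≥0∞ := fun x => ∫⁻ y in I, ENNReal.ofReal (|x - y| ^ (-s) * h y) with hLdef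
  have hp : (0 : ℝ) < (u₂ - u₁) ^ s := Real.rpow_pos_of_pos hlen _
  -- key lower bound on L
  have key : ∀ x ∈ U, ENNReal.ofReal c * A ≤ L x := by
    intro x hx
    have step1 : ENNReal.ofReal c * A = ∫⁻ y in U, ENNReal.ofReal (c * h y) := by
      rw [hAdef, ← lintegral_const_mul' _ _ ENNReal.ofReal_ne_top]
      congr 1; funext y; rw [ENNReal.ofReal_mul hc.le]
    rw [step1]
    refine le_trans ?_ (lintegral_mono_set hUI)
    refine lintegral_mono_ae ?_
    have hxne : ∀ᵐ y ∂(volume.restrict U), y ≠ x := by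
      refine ae_restrict_of_ae ?_
      rw [ae_iff]
      have : {y : ℝ | ¬ y ≠ x} = {x} := by ext y; simp
      rw [this]; exact Real.volume_singleton
    filter_upwards [hxne, ae_restrict_mem measurableSet_Icc] with y hy hyU
    refine ENNReal.ofReal_le_ofReal (mul_le_mul_of_nonneg_right ?_ (hnn y))
    have habs : |x - y| ≤ u₂ - u₁ := by
      rw [abs_sub_le_iff]; constructor <;> [linarith [hx.1, hx.2, hyU.1, hyU.2];
        linarith [hx.1, hx.2, hyU.1, hyU.2]]
    have habs0 : 0 < |x - y| := abs_pos.mpr (sub_ne_zero.mpr (Ne.symm hy))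
    exact Real.rpow_le_rpow_of_nonpos habs0 habs (neg_nonpos.mpr hs0.le)
  -- A is finite
  have hu1U : u₁ ∈ U := ⟨le_refl _, hU.le⟩
  have hLB : ∀ x ∈ U, L x ≤ ENNReal.ofReal B := fun x hx =>
    (lintegral_mono_set hI).trans (hB x (hUsub hx))
  have hAfin : A ≠ ∞ := by
    intro hAtop
    have := (key u₁ hu1U).trans (hLB u₁ hu1U)
    rw [hAtop, ENNReal.mul_top (by simp [ENNReal.ofReal_eq_zero, not_le.mpr hc])] at this
    exact (ENNReal.ofReal_lt_top.not_ge) this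
  -- main integral bound
  have main : ∫ x in U, h x / Rs s h I x ≤ (u₂ - u₁) ^ s := by
    by_cases hA0 : A = 0
    · have hze : ∀ᵐ y ∂(volume.restrict U), ENNReal.ofReal (h y) = 0 := by
        have h0 := (lintegral_eq_zero_iff
          (μ := volume.restrict U)
          (by measurability : Measurable fun y : ℝ => ENNReal.ofReal (h y))).mp hA0
        filter_upwards [h0] with y hy
        simpa using hy
      have : ∀ᵐ x ∂(volume.restrict U), h x / Rs s h I x = 0 := by
        filter_upwards [hze] with x hx
        have : h x = 0 := le_antisymm (ENNReal.ofReal_eq_zero.mp hx) (hnn x)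
        simp [this]
      rw [integral_congr_ae this]
      simpa using hp.le
    · set a : ℝ := A.toReal with hadef
      have ha : 0 < a := ENNReal.toReal_pos hA0 hAfin
      -- pointwise bound on U
      have ptwise : ∀ x ∈ U, h x / Rs s h I x ≤ h x * ((u₂ - u₁) ^ s / a) := by
        intro x hx
        have hLfin : L x ≠ ∞ := ((hLB x hx).trans_lt ENNReal.ofReal_lt_top).ne
        have hRs : c * a ≤ Rs s h I x := by
          have := key x hx
          have h2 := ENNReal.toReal_mono hLfin this
          rwa [ENNReal.toReal_mul, ENNReal.toReal_ofReal hc.le] at h2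
        have hca : 0 < c * a := mul_pos hc ha
        calc h x / Rs s h I x ≤ h x / (c * a) :=
              div_le_div_of_nonneg_left (hnn x) hca hRs |>.trans_eq rfl
          _ = h x * ((u₂ - u₁) ^ s / a) := by
              rw [hcdef, Real.rpow_neg hlen.le]
              field_simp
      -- h is integrable on U
      have hInt : IntegrableOn h U := by
        refine ⟨hmeas.aestronglyMeasurable, ?_⟩
        rw [hasFiniteIntegral_iff_norm]
        simp_rw [Real.norm_eq_abs]
        have heq : ∀ y : ℝ, ENNReal.ofReal |h y| = ENNReal.ofReal (h y) := fun y => by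
          rw [abs_of_nonneg (hnn y)]
        simp_rw [heq]
        exact Ne.lt_top hAfin
      have hgInt : Integrable (fun x => h x * ((u₂ - u₁) ^ s / a)) (volume.restrict U) :=
        hInt.mul_const _
      have hmono : ∫ x in U, h x / Rs s h I x ≤ ∫ x in U, h x * ((u₂ - u₁) ^ s / a) := by
        refine integral_mono_of_nonneg ?_ hgInt ?_
        · filter_upwards with x
          exact div_nonneg (hnn x) ENNReal.toReal_nonneg
        · filter_upwards [ae_restrict_mem measurableSet_Icc] with x hx
          exact ptwise x hx
      have hint_h : ∫ x in U, h x = a := by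
        rw [integral_eq_lintegral_of_nonneg_ae (Filter.Eventually.of_forall hnn)
          hmeas.aestronglyMeasurable]
      have : ∫ x in U, h x * ((u₂ - u₁) ^ s / a) = (u₂ - u₁) ^ s := by
        rw [integral_mul_const, hint_h]
        field_simp
      linarith [hmono, this.le, this.ge]
  rw [one_div, inv_mul_le_iff₀ hp]
  linarith [main]
end

section
/- Let λ ∈ (1/2, 1) and suppose that the Bernoulli convolution measure μ_λ is absolutely continuous with density h_λ ∈ L²([0,1]). Then for every ε > 0 there exists a constant C_ε such that |I|^{1+ε} ‖h_λ·χ_I‖_{L²}² ≤ C_ε ‖h_λ·χ_I‖_{L¹}² holds for every interval I ⊆ [0,1]. -/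
open MeasureTheory Filter Set
open scoped ENNReal

/-- `μ` is the Bernoulli convolution measure `μ_λ`: the unique Borel probability
measure on `[0,1]` with `μ = (1/2)·(S₁)_*μ + (1/2)·(S₂)_*μ` where `S₁ x = λx`
and `S₂ x = λx + 1 − λ`. -/
def IsBernoulliConvolution (lam : ℝ) (μ : Measure ℝ) : Prop :=
  IsProbabilityMeasure μ ∧ μ (Set.Icc (0 : ℝ) 1) = 1 ∧
    μ = (1 / 2 : ℝ≥0∞) • Measure.map (fun x => lam * x) μ +
      (1 / 2 : ℝ≥0∞) • Measure.map (fun x => lam * x + 1 - lam) μ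

namespace BCAux

variable {L : ℝ} {μ : Measure ℝ} {h : ℝ → ℝ}

noncomputable def HH (h : ℝ → ℝ) : ℝ → ℝ≥0∞ := fun x => ENNReal.ofReal (h x)

noncomputable def YE (h : ℝ → ℝ) (a b : ℝ) : ℝ≥0∞ :=
  ∫⁻ x in Set.Icc a b, (HH h x) ^ (2:ℝ)

noncomputable def yy (h : ℝ → ℝ) (a b : ℝ) : ℝ := (YE h a b).toReal

noncomputable def mm (μ : Measure ℝ) (a b : ℝ) : ℝ := (μ (Set.Icc a b)).toReal

lemma Hmeas (hmeas : Measurable h) : Measurable (HH h) := by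
  unfold HH; fun_prop

lemma pre1 (hL0 : 0 < L) (a b : ℝ) :
    (fun x => L * x) ⁻¹' Set.Icc a b = Set.Icc (a / L) (b / L) := by
  ext x
  simp only [Set.mem_preimage, Set.mem_Icc]
  rw [div_le_iff₀ hL0, le_div_iff₀ hL0]
  constructor <;> intro hx <;> constructor <;> linarith [hx.1, hx.2]

lemma pre2 (hL0 : 0 < L) (a b : ℝ) :
    (fun x => L * x + 1 - L) ⁻¹' Set.Icc a b = Set.Icc ((a + L - 1) / L) ((b + L - 1) / L) := by
  ext x
  simp only [Set.mem_preimage, Set.mem_Icc]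
  rw [div_le_iff₀ hL0, le_div_iff₀ hL0]
  constructor <;> intro hx <;> constructor <;> linarith [hx.1, hx.2]

lemma meas1 : Measurable (fun x : ℝ => L * x) := by fun_prop

lemma meas2 : Measurable (fun x : ℝ => L * x + 1 - L) := by fun_prop

lemma murec (hself : μ = (1 / 2 : ℝ≥0∞) • Measure.map (fun x => L * x) μ +
      (1 / 2 : ℝ≥0∞) • Measure.map (fun x => L * x + 1 - L) μ)
    {A : Set ℝ} (hA : MeasurableSet A) :
    μ A = 2⁻¹ * μ ((fun x => L * x) ⁻¹' A) + 2⁻¹ * μ ((fun x => L * x + 1 - L) ⁻¹' A) := by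
  conv_lhs => rw [hself]
  rw [Measure.add_apply, Measure.smul_apply, Measure.smul_apply,
    Measure.map_apply meas1 hA, Measure.map_apply meas2 hA]
  norm_num

lemma cov {c t : ℝ} (hc : 0 < c) {F : ℝ → ℝ≥0∞} (hF : Measurable F) {s : Set ℝ}
    (hs : MeasurableSet s) :
    ∫⁻ x in s, F ((x - t) / c) = ENNReal.ofReal c * ∫⁻ y in (fun y => c * y + t) ⁻¹' s, F y := by
  have hφ : Measurable (fun y : ℝ => c * y + t) := by fun_prop
  have hmap : Measure.map (fun y : ℝ => c * y + t) volume
      = (ENNReal.ofReal c⁻¹) • (volume : Measure ℝ) := by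
    have hcomp : (fun y : ℝ => c * y + t) = (fun y : ℝ => y + t) ∘ (fun y : ℝ => c * y) := rfl
    rw [hcomp, ← Measure.map_map (by fun_prop) (by fun_prop),
      Real.map_volume_mul_left (ne_of_gt hc), Measure.map_smul,
      map_add_right_eq_self volume t, abs_of_pos (inv_pos.mpr hc)]
  have hres : (volume : Measure ℝ).restrict s
      = (ENNReal.ofReal c) • Measure.map (fun y : ℝ => c * y + t)
          ((volume : Measure ℝ).restrict ((fun y => c * y + t) ⁻¹' s)) := by
    rw [← Measure.restrict_map hφ hs, hmap, Measure.restrict_smul, smul_smul,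
      ← ENNReal.ofReal_mul (le_of_lt hc), mul_inv_cancel₀ (ne_of_gt hc)]
    simp
  have hmeasG : Measurable (fun x : ℝ => F ((x - t) / c)) := by fun_prop
  calc ∫⁻ x in s, F ((x - t) / c)
      = ∫⁻ x, F ((x - t) / c) ∂((volume : Measure ℝ).restrict s) := rfl
    _ = ENNReal.ofReal c * ∫⁻ x, F ((x - t) / c)
          ∂(Measure.map (fun y : ℝ => c * y + t)
            ((volume : Measure ℝ).restrict ((fun y => c * y + t) ⁻¹' s))) := by
        rw [hres]; rw [lintegral_smul_measure, smul_eq_mul]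
    _ = ENNReal.ofReal c * ∫⁻ y in (fun y => c * y + t) ⁻¹' s, F ((c * y + t - t) / c) := by
        rw [lintegral_map hmeasG hφ]
    _ = ENNReal.ofReal c * ∫⁻ y in (fun y => c * y + t) ⁻¹' s, F y := by
        congr 1
        apply lintegral_congr
        intro y
        congr 1
        field_simp
        ring

lemma mu_compl (hprob : IsProbabilityMeasure μ) (h01 : μ (Set.Icc 0 1) = 1) :
    μ (Set.Icc (0:ℝ) 1)ᶜ = 0 := by
  haveI := hprob
  have := measure_compl (μ := μ) (measurableSet_Icc (a := (0:ℝ)) (b := 1)) (measure_ne_top μ _)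
  rw [h01, hprob.measure_univ] at this
  simp [this]

lemma mu_out (hprob : IsProbabilityMeasure μ) (h01 : μ (Set.Icc 0 1) = 1)
    {A : Set ℝ} (hA : A ⊆ (Set.Icc (0:ℝ) 1)ᶜ) : μ A = 0 :=
  measure_mono_null hA (mu_compl hprob h01)

lemma half_eq_zero {a : ℝ≥0∞} (ha : a ≠ ⊤) (heq : a = 2⁻¹ * a) : a = 0 := by
  by_contra h0
  have h1 : 2⁻¹ * a < 1 * a := by
    apply ENNReal.mul_lt_mul_left h0 ha
    norm_num
  rw [one_mul] at h1
  exact absurd heq (ne_of_gt h1)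

section Junk2

variable (hprob : IsProbabilityMeasure μ) (h01 : μ (Set.Icc 0 1) = 1)
  (hL0 : 0 < L) (hL1 : L < 1)
  (hself : μ = (1 / 2 : ℝ≥0∞) • Measure.map (fun x => L * x) μ +
      (1 / 2 : ℝ≥0∞) • Measure.map (fun x => L * x + 1 - L) μ)

include hprob h01 hL0 hL1 hself

lemma mu_zero : μ {(0:ℝ)} = 0 := by
  haveI := hprob
  have hpre1 : (fun x : ℝ => L * x) ⁻¹' {0} = {(0:ℝ)} := by
    ext x; simp [mul_eq_zero, ne_of_gt hL0]
  have hpre2 : μ ((fun x : ℝ => L * x + 1 - L) ⁻¹' {0}) = 0 := by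
    apply mu_out hprob h01
    intro x hx
    simp only [Set.mem_preimage, Set.mem_singleton_iff] at hx
    simp only [Set.mem_compl_iff, Set.mem_Icc, not_and_or, not_le]
    left; nlinarith
  have := murec hself (A := {(0:ℝ)}) (measurableSet_singleton 0)
  rw [hpre1, hpre2, mul_zero, add_zero] at this
  exact half_eq_zero (measure_ne_top μ _) this

lemma mu_one : μ {(1:ℝ)} = 0 := by
  haveI := hprob
  have hpre2 : (fun x : ℝ => L * x + 1 - L) ⁻¹' {1} = {(1:ℝ)} := by
    ext x
    simp only [Set.mem_preimage, Set.mem_singleton_iff]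
    constructor
    · intro hx; nlinarith
    · intro hx; rw [hx]; ring
  have hpre1 : μ ((fun x : ℝ => L * x) ⁻¹' {1}) = 0 := by
    apply mu_out hprob h01
    intro x hx
    simp only [Set.mem_preimage, Set.mem_singleton_iff] at hx
    simp only [Set.mem_compl_iff, Set.mem_Icc, not_and_or, not_le]
    right; nlinarith
  have := murec hself (A := {(1:ℝ)}) (measurableSet_singleton 1)
  rw [hpre1, hpre2, mul_zero, zero_add] at this
  exact half_eq_zero (measure_ne_top μ _) this

lemma mu_junk_left {c d : ℝ} (hd : d ≤ 0) : μ (Set.Icc c d) = 0 := by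
  have hsub : Set.Icc c d ⊆ Set.Iio 0 ∪ {(0:ℝ)} := by
    intro x hx
    rcases lt_or_eq_of_le (le_trans hx.2 hd) with h' | h'
    · exact Or.inl h'
    · exact Or.inr (by simp [h'])
  refine measure_mono_null hsub ?_
  refine le_antisymm ?_ (zero_le)
  refine le_trans (measure_union_le _ _) ?_
  rw [mu_out hprob h01 (by intro x hx; simp only [Set.mem_Iio] at hx; simp [Set.mem_Icc]; intro h'; linarith),
    mu_zero hprob h01 hL0 hL1 hself]
  simp

lemma mu_junk_right {c d : ℝ} (hc : 1 ≤ c) : μ (Set.Icc c d) = 0 := by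
  have hsub : Set.Icc c d ⊆ Set.Ioi 1 ∪ {(1:ℝ)} := by
    intro x hx
    rcases lt_or_eq_of_le (le_trans hc hx.1) with h' | h'
    · exact Or.inl h'
    · exact Or.inr (by simp [h'.symm])
  refine measure_mono_null hsub ?_
  refine le_antisymm ?_ (zero_le)
  refine le_trans (measure_union_le _ _) ?_
  rw [mu_out hprob h01 (by intro x hx; simp only [Set.mem_Ioi] at hx; simp [Set.mem_Icc]; intro h'; linarith),
    mu_one hprob h01 hL0 hL1 hself]
  simp


end Junk2

lemma cov0 {c : ℝ} (hc : 0 < c) {F : ℝ → ℝ≥0∞} (hF : Measurable F) {s : Set ℝ}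
    (hs : MeasurableSet s) :
    ∫⁻ x in s, F (x / c) = ENNReal.ofReal c * ∫⁻ y in (fun y => c * y) ⁻¹' s, F y := by
  have := cov (t := 0) hc hF hs
  simp only [sub_zero, add_zero] at this
  exact this

lemma cov1 {c t : ℝ} (hc : 0 < c) {F : ℝ → ℝ≥0∞} (hF : Measurable F) {s : Set ℝ}
    (hs : MeasurableSet s) :
    ∫⁻ x in s, F ((x + t - 1) / c) = ENNReal.ofReal c *
      ∫⁻ y in (fun y => c * y + 1 - t) ⁻¹' s, F y := by
  have h1 := cov (t := 1 - t) hc hF hs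
  have e1 : (fun x : ℝ => F ((x - (1 - t)) / c)) = fun x => F ((x + t - 1) / c) := by
    funext x; ring_nf
  have e2 : (fun y : ℝ => c * y + (1 - t)) = fun y => c * y + 1 - t := by
    funext y; ring
  rw [e2] at h1
  rw [← h1]
  apply lintegral_congr
  intro x
  congr 1
  ring

section FEQ

variable (hL0 : 0 < L) (hL1 : L < 1) (hmeas : Measurable h)
  (hprob : IsProbabilityMeasure μ)
  (hself : μ = (1 / 2 : ℝ≥0∞) • Measure.map (fun x => L * x) μ +
      (1 / 2 : ℝ≥0∞) • Measure.map (fun x => L * x + 1 - L) μ)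
  (hdens : μ = volume.withDensity (fun x => ENNReal.ofReal (h x)))

include hL0 hmeas hdens in
lemma map_wd1 : Measure.map (fun x => L * x) μ
    = volume.withDensity (fun x => ENNReal.ofReal L⁻¹ * HH h (x / L)) := by
  have hH : Measurable (HH h) := Hmeas hmeas
  refine Measure.ext fun A hA => ?_
  rw [Measure.map_apply (by fun_prop : Measurable fun x : ℝ => L * x) hA,
    withDensity_apply _ hA]
  have : μ ((fun x => L * x) ⁻¹' A) = ∫⁻ x in (fun x => L * x) ⁻¹' A, HH h x := by
    rw [hdens, withDensity_apply _ (((by fun_prop : Measurable fun x : ℝ => L * x)) hA)]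
    rfl
  rw [this]
  rw [lintegral_const_mul _ (by fun_prop : Measurable fun x => HH h (x / L))]
  rw [cov0 hL0 (by fun_prop : Measurable fun y => HH h y) hA]
  rw [← mul_assoc, ← ENNReal.ofReal_mul (by positivity), inv_mul_cancel₀ (ne_of_gt hL0)]
  simp

include hL0 hmeas hdens in
lemma map_wd2 : Measure.map (fun x => L * x + 1 - L) μ
    = volume.withDensity (fun x => ENNReal.ofReal L⁻¹ * HH h ((x + L - 1) / L)) := by
  have hH : Measurable (HH h) := Hmeas hmeas
  refine Measure.ext fun A hA => ?_
  rw [Measure.map_apply (by fun_prop : Measurable fun x : ℝ => L * x + 1 - L) hA,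
    withDensity_apply _ hA]
  have : μ ((fun x => L * x + 1 - L) ⁻¹' A) = ∫⁻ x in (fun x => L * x + 1 - L) ⁻¹' A, HH h x := by
    rw [hdens, withDensity_apply _ (((by fun_prop : Measurable fun x : ℝ => L * x + 1 - L)) hA)]
    rfl
  rw [this]
  rw [lintegral_const_mul _ (by fun_prop : Measurable fun x => HH h ((x + L - 1) / L))]
  rw [cov1 hL0 (by fun_prop : Measurable fun y => HH h y) hA]
  rw [← mul_assoc, ← ENNReal.ofReal_mul (by positivity), inv_mul_cancel₀ (ne_of_gt hL0)]
  simp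

include hL0 hL1 hmeas hprob hself hdens in
lemma feq : HH h =ᵐ[volume] fun x =>
    (2⁻¹ * ENNReal.ofReal L⁻¹) * (HH h (x / L) + HH h ((x + L - 1) / L)) := by
  have hH : Measurable (HH h) := Hmeas hmeas
  have hG : Measurable (fun x =>
      (2⁻¹ * ENNReal.ofReal L⁻¹) * (HH h (x / L) + HH h ((x + L - 1) / L))) := by fun_prop
  have hfin : ∫⁻ x, HH h x ∂(volume : Measure ℝ) ≠ ⊤ := by
    have : ∫⁻ x, HH h x ∂(volume : Measure ℝ) = μ Set.univ := by
      rw [hdens]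
      rw [withDensity_apply _ MeasurableSet.univ, setLIntegral_univ]
      rfl
    rw [this, hprob.measure_univ]
    exact ENNReal.one_ne_top
  rw [← withDensity_eq_iff hH.aemeasurable hG.aemeasurable hfin]
  have key : volume.withDensity (HH h) = volume.withDensity (fun x =>
      2⁻¹ * (ENNReal.ofReal L⁻¹ * HH h (x / L)) + 2⁻¹ * (ENNReal.ofReal L⁻¹ * HH h ((x + L - 1) / L))) := by
    have hdens' : volume.withDensity (HH h) = μ := hdens.symm
    rw [hdens', hself, map_wd1 hL0 hmeas hdens, map_wd2 hL0 hmeas hdens]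
    refine Measure.ext fun A hA => ?_
    rw [withDensity_apply _ hA, Measure.add_apply, Measure.smul_apply, Measure.smul_apply,
      withDensity_apply _ hA, withDensity_apply _ hA,
      lintegral_add_left (by fun_prop) _,
      lintegral_const_mul _ (by fun_prop : Measurable fun x => ENNReal.ofReal L⁻¹ * HH h (x / L)),
      lintegral_const_mul _ (by fun_prop : Measurable fun x => ENNReal.ofReal L⁻¹ * HH h ((x + L - 1) / L))]
    have : ∀ z : ℝ≥0∞, (1/2 : ℝ≥0∞) • z = 2⁻¹ * z := by
      intro z; rw [smul_eq_mul]; norm_num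
    rw [this, this]
  rw [key]
  congr 1
  funext x
  ring

end FEQ

section YSTEP

lemma esq (x : ℝ≥0∞) : (x ^ (1/2:ℝ)) ^ (2:ℝ) = x := by
  rw [← ENNReal.rpow_mul]; norm_num

variable (hL0 : 0 < L) (hL1 : L < 1) (hmeas : Measurable h)
  (hprob : IsProbabilityMeasure μ)
  (hself : μ = (1 / 2 : ℝ≥0∞) • Measure.map (fun x => L * x) μ +
      (1 / 2 : ℝ≥0∞) • Measure.map (fun x => L * x + 1 - L) μ)
  (hdens : μ = volume.withDensity (fun x => ENNReal.ofReal (h x)))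

include hL0 hL1 hmeas hprob hself hdens in
lemma YEstep (a b : ℝ) : YE h a b ≤ ENNReal.ofReal (4⁻¹ * L⁻¹) *
    ((YE h (a/L) (b/L)) ^ (1/2:ℝ) + (YE h ((a+L-1)/L) ((b+L-1)/L)) ^ (1/2:ℝ)) ^ (2:ℝ) := by
  have hH : Measurable (HH h) := Hmeas hmeas
  set c0 : ℝ≥0∞ := 2⁻¹ * ENNReal.ofReal L⁻¹ with hc0
  set u : ℝ → ℝ≥0∞ := fun x => HH h (x / L) with hu
  set v : ℝ → ℝ≥0∞ := fun x => HH h ((x + L - 1) / L) with hv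
  have hum : Measurable u := by fun_prop
  have hvm : Measurable v := by fun_prop
  have hae : YE h a b = ∫⁻ x in Set.Icc a b, (c0 * (u x + v x)) ^ (2:ℝ) := by
    refine lintegral_congr_ae ?_
    filter_upwards [ae_restrict_of_ae (feq hL0 hL1 hmeas hprob hself hdens)] with x hx
    rw [hx]
  rw [hae]
  have hexp : ∀ w : ℝ≥0∞, (c0 * w) ^ (2:ℝ) = c0 ^ (2:ℝ) * w ^ (2:ℝ) := fun w =>
    ENNReal.mul_rpow_of_nonneg _ _ (by norm_num)
  simp only [hexp]
  rw [lintegral_const_mul _ (by fun_prop : Measurable fun x => (u x + v x) ^ (2:ℝ))]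
  have hmink : (∫⁻ x in Set.Icc a b, (u x + v x) ^ (2:ℝ)) ≤
      ((∫⁻ x in Set.Icc a b, u x ^ (2:ℝ)) ^ (1/2:ℝ)
        + (∫⁻ x in Set.Icc a b, v x ^ (2:ℝ)) ^ (1/2:ℝ)) ^ (2:ℝ) := by
    have hm := ENNReal.lintegral_Lp_add_le (μ := volume.restrict (Set.Icc a b))
      hum.aemeasurable hvm.aemeasurable (by norm_num : (1:ℝ) ≤ 2)
    simp only [Pi.add_apply] at hm
    conv_lhs => rw [← esq (∫⁻ x in Set.Icc a b, (u x + v x) ^ (2:ℝ))]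
    exact ENNReal.rpow_le_rpow hm (by norm_num)
  have hcov1 : (∫⁻ x in Set.Icc a b, u x ^ (2:ℝ))
      = ENNReal.ofReal L * YE h (a/L) (b/L) := by
    have hc := cov0 hL0 (F := fun y => HH h y ^ (2:ℝ)) (by fun_prop)
      (measurableSet_Icc (a := a) (b := b))
    rw [pre1 hL0 a b] at hc
    exact hc
  have hcov2 : (∫⁻ x in Set.Icc a b, v x ^ (2:ℝ))
      = ENNReal.ofReal L * YE h ((a+L-1)/L) ((b+L-1)/L) := by
    have hc := cov1 hL0 (t := L) (F := fun y => HH h y ^ (2:ℝ)) (by fun_prop)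
      (measurableSet_Icc (a := a) (b := b))
    rw [pre2 hL0 a b] at hc
    exact hc
  rw [hcov1, hcov2] at hmink
  calc c0 ^ (2:ℝ) * ∫⁻ x in Set.Icc a b, (u x + v x) ^ (2:ℝ)
      ≤ c0 ^ (2:ℝ) * ((ENNReal.ofReal L * YE h (a/L) (b/L)) ^ (1/2:ℝ)
        + (ENNReal.ofReal L * YE h ((a+L-1)/L) ((b+L-1)/L)) ^ (1/2:ℝ)) ^ (2:ℝ) :=
        mul_le_mul_right hmink _
    _ = ENNReal.ofReal (4⁻¹ * L⁻¹) *
        ((YE h (a/L) (b/L)) ^ (1/2:ℝ) + (YE h ((a+L-1)/L) ((b+L-1)/L)) ^ (1/2:ℝ)) ^ (2:ℝ) := by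
        rw [ENNReal.mul_rpow_of_nonneg _ _ (by norm_num : (0:ℝ) ≤ 1/2),
          ENNReal.mul_rpow_of_nonneg (ENNReal.ofReal L) _ (by norm_num : (0:ℝ) ≤ 1/2),
          ← mul_add,
          ENNReal.mul_rpow_of_nonneg _ _ (by norm_num : (0:ℝ) ≤ 2),
          ENNReal.mul_rpow_of_nonneg (ENNReal.ofReal L ^ (1/2:ℝ)) _ (by norm_num : (0:ℝ) ≤ 2),
          esq (ENNReal.ofReal L)]
        have hconst : (2⁻¹ : ℝ≥0∞) ^ (2:ℝ) * (ENNReal.ofReal L⁻¹) ^ (2:ℝ) * ENNReal.ofReal L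
            = ENNReal.ofReal (4⁻¹ * L⁻¹) := by
          have h2 : (2⁻¹ : ℝ≥0∞) = ENNReal.ofReal 2⁻¹ := by
            rw [ENNReal.ofReal_inv_of_pos (by norm_num)]
            norm_num
          rw [h2, ENNReal.ofReal_rpow_of_pos (by norm_num),
            ENNReal.ofReal_rpow_of_pos (by positivity),
            ← ENNReal.ofReal_mul (by positivity), ← ENNReal.ofReal_mul (by positivity)]
          congr 1
          have hsq : ∀ x : ℝ, x ^ (2:ℝ) = x * x := fun x => by
            rw [show (2:ℝ) = ((2:ℕ):ℝ) by norm_num, Real.rpow_natCast]; ring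
          rw [hsq, hsq]
          field_simp
          ring
        calc (2⁻¹:ℝ≥0∞) ^ (2:ℝ) * (ENNReal.ofReal L⁻¹) ^ (2:ℝ)
              * (ENNReal.ofReal L * ((YE h (a/L) (b/L)) ^ (1/2:ℝ)
                + (YE h ((a+L-1)/L) ((b+L-1)/L)) ^ (1/2:ℝ)) ^ (2:ℝ))
            = ((2⁻¹:ℝ≥0∞) ^ (2:ℝ) * (ENNReal.ofReal L⁻¹) ^ (2:ℝ) * ENNReal.ofReal L)
              * ((YE h (a/L) (b/L)) ^ (1/2:ℝ)
                + (YE h ((a+L-1)/L) ((b+L-1)/L)) ^ (1/2:ℝ)) ^ (2:ℝ) := by ring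
          _ = ENNReal.ofReal (4⁻¹ * L⁻¹) * ((YE h (a/L) (b/L)) ^ (1/2:ℝ)
                + (YE h ((a+L-1)/L) ((b+L-1)/L)) ^ (1/2:ℝ)) ^ (2:ℝ) := by rw [hconst]


end YSTEP

section RealSide

lemma YEtot_fin (hnn : ∀ x, 0 ≤ h x) (hL2 : MeasureTheory.MemLp h 2 volume) :
    (∫⁻ x, HH h x ^ (2:ℝ)) ≠ ⊤ := by
  have hsq := hL2.integrable_sq
  have hfin := hsq.hasFiniteIntegral
  rw [MeasureTheory.HasFiniteIntegral] at hfin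
  have heq : (∫⁻ x, HH h x ^ (2:ℝ)) = ∫⁻ x, ‖h x ^ 2‖ₑ := by
    apply lintegral_congr
    intro x
    unfold HH
    rw [Real.enorm_eq_ofReal (by positivity : (0:ℝ) ≤ h x ^ 2), ENNReal.ofReal_pow (hnn x),
      ← ENNReal.rpow_natCast (ENNReal.ofReal (h x)) 2]
    norm_num
  rw [heq]
  exact hfin.ne

lemma YE_le_tot (a b : ℝ) : YE h a b ≤ ∫⁻ x, HH h x ^ (2:ℝ) :=
  setLIntegral_le_lintegral _ _

lemma YE_fin (hnn : ∀ x, 0 ≤ h x) (hL2 : MeasureTheory.MemLp h 2 volume) (a b : ℝ) :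
    YE h a b ≠ ⊤ :=
  fun hc => YEtot_fin hnn hL2 (eq_top_iff.mpr (hc ▸ YE_le_tot a b))

lemma yy_nonneg (a b : ℝ) : 0 ≤ yy h a b := ENNReal.toReal_nonneg
lemma mm_nonneg (a b : ℝ) : 0 ≤ mm μ a b := ENNReal.toReal_nonneg

lemma mm_le_one (hprob : IsProbabilityMeasure μ) (a b : ℝ) : mm μ a b ≤ 1 := by
  haveI := hprob
  have := prob_le_one (μ := μ) (s := Set.Icc a b)
  unfold mm
  rw [show (1:ℝ) = (1:ℝ≥0∞).toReal by simp]
  exact ENNReal.toReal_mono ENNReal.one_ne_top this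

lemma mm_mono (hprob : IsProbabilityMeasure μ) {a b c d : ℝ} (hca : c ≤ a) (hbd : b ≤ d) :
    mm μ a b ≤ mm μ c d := by
  haveI := hprob
  exact ENNReal.toReal_mono (measure_ne_top μ _) (measure_mono (Set.Icc_subset_Icc hca hbd))

lemma mrec (hprob : IsProbabilityMeasure μ) (hL0 : 0 < L)
    (hself : μ = (1 / 2 : ℝ≥0∞) • Measure.map (fun x => L * x) μ +
      (1 / 2 : ℝ≥0∞) • Measure.map (fun x => L * x + 1 - L) μ) (a b : ℝ) :
    mm μ a b = 2⁻¹ * mm μ (a/L) (b/L) + 2⁻¹ * mm μ ((a+L-1)/L) ((b+L-1)/L) := by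
  haveI := hprob
  have := murec hself (A := Set.Icc a b) measurableSet_Icc
  rw [pre1 hL0, pre2 hL0] at this
  unfold mm
  rw [this, ENNReal.toReal_add, ENNReal.toReal_mul, ENNReal.toReal_mul]
  · norm_num
  · exact ENNReal.mul_ne_top (by norm_num) (measure_ne_top μ _)
  · exact ENNReal.mul_ne_top (by norm_num) (measure_ne_top μ _)

lemma mm_trunc (hprob : IsProbabilityMeasure μ) (h01 : μ (Set.Icc 0 1) = 1) (a b : ℝ) :
    mm μ a b = mm μ (max a 0) (min b 1) := by
  haveI := hprob
  unfold mm
  congr 1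
  have hinter : Set.Icc a b ∩ Set.Icc 0 1 = Set.Icc (max a 0) (min b 1) := Set.Icc_inter_Icc
  have hdiff : μ (Set.Icc a b \ Set.Icc 0 1) = 0 := mu_out hprob h01 (fun x hx => hx.2)
  refine le_antisymm ?_ (by rw [← hinter]; exact measure_mono Set.inter_subset_left)
  calc μ (Set.Icc a b) ≤ μ (Set.Icc a b ∩ Set.Icc 0 1) + μ (Set.Icc a b \ Set.Icc 0 1) := by
        conv_lhs => rw [← Set.inter_union_diff (Set.Icc a b) (Set.Icc 0 1)]
        exact measure_union_le _ _
    _ = μ (Set.Icc (max a 0) (min b 1)) := by rw [hdiff, hinter, add_zero]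

lemma Hzero_ae (hmeas : Measurable h)
    (hprob : IsProbabilityMeasure μ) (h01 : μ (Set.Icc 0 1) = 1)
    (hdens : μ = volume.withDensity (fun x => ENNReal.ofReal (h x))) :
    ∀ᵐ x ∂(volume : Measure ℝ), x ∉ Set.Icc (0:ℝ) 1 → HH h x = 0 := by
  have hint : ∫⁻ x in (Set.Icc (0:ℝ) 1)ᶜ, HH h x = 0 := by
    have : μ (Set.Icc (0:ℝ) 1)ᶜ = 0 := mu_out hprob h01 (le_refl _)
    rw [hdens, withDensity_apply _ measurableSet_Icc.compl] at this
    exact this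
  have hae := (setLIntegral_eq_zero_iff measurableSet_Icc.compl (Hmeas hmeas)).mp hint
  filter_upwards [hae] with x hx hx'
  exact hx hx'

lemma YE_trunc (hmeas : Measurable h)
    (hprob : IsProbabilityMeasure μ) (h01 : μ (Set.Icc 0 1) = 1)
    (hdens : μ = volume.withDensity (fun x => ENNReal.ofReal (h x))) (a b : ℝ) :
    YE h a b = YE h (max a 0) (min b 1) := by
  unfold YE
  have hinter : Set.Icc a b ∩ Set.Icc 0 1 = Set.Icc (max a 0) (min b 1) := Set.Icc_inter_Icc
  have hdiff : ∫⁻ x in Set.Icc a b \ Set.Icc 0 1, (HH h x) ^ (2:ℝ) = 0 := by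
    rw [← lintegral_zero (μ := volume.restrict (Set.Icc a b \ Set.Icc 0 1))]
    refine lintegral_congr_ae
      ((ae_restrict_iff' (measurableSet_Icc.diff measurableSet_Icc)).mpr ?_)
    filter_upwards [Hzero_ae hmeas hprob h01 hdens] with x hx hx'
    rw [hx hx'.2]
    exact ENNReal.zero_rpow_of_pos (by norm_num)
  calc ∫⁻ x in Set.Icc a b, (HH h x) ^ (2:ℝ)
      = (∫⁻ x in Set.Icc a b ∩ Set.Icc 0 1, (HH h x) ^ (2:ℝ))
        + (∫⁻ x in Set.Icc a b \ Set.Icc 0 1, (HH h x) ^ (2:ℝ)) := by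
        exact (lintegral_inter_add_diff (μ := volume) (fun x => HH h x ^ (2:ℝ)) (Set.Icc a b)
          (measurableSet_Icc (a := (0:ℝ)) (b := 1))).symm
    _ = ∫⁻ x in Set.Icc (max a 0) (min b 1), (HH h x) ^ (2:ℝ) := by
        rw [hdiff, hinter, add_zero]

lemma YE_mono {a b c d : ℝ} (hca : c ≤ a) (hbd : b ≤ d) : YE h a b ≤ YE h c d :=
  lintegral_mono_set (Set.Icc_subset_Icc hca hbd)

lemma yy_mono (hnn : ∀ x, 0 ≤ h x) (hL2 : MeasureTheory.MemLp h 2 volume)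
    {a b c d : ℝ} (hca : c ≤ a) (hbd : b ≤ d) : yy h a b ≤ yy h c d :=
  ENNReal.toReal_mono (YE_fin hnn hL2 c d) (YE_mono hca hbd)

lemma yy_trunc (hmeas : Measurable h)
    (hprob : IsProbabilityMeasure μ) (h01 : μ (Set.Icc 0 1) = 1)
    (hdens : μ = volume.withDensity (fun x => ENNReal.ofReal (h x))) (a b : ℝ) :
    yy h a b = yy h (max a 0) (min b 1) := by
  unfold yy; rw [YE_trunc hmeas hprob h01 hdens]

lemma yy_empty (hab : b ≤ a) : yy h a b = 0 := by
  unfold yy YE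
  have : (volume : Measure ℝ) (Set.Icc a b) = 0 := by
    rw [Real.volume_Icc]
    exact ENNReal.ofReal_eq_zero.mpr (by linarith)
  rw [Measure.restrict_eq_zero.mpr this]
  simp

lemma ystep (hL0 : 0 < L) (hL1 : L < 1) (hmeas : Measurable h) (hnn : ∀ x, 0 ≤ h x)
    (hprob : IsProbabilityMeasure μ)
    (hself : μ = (1 / 2 : ℝ≥0∞) • Measure.map (fun x => L * x) μ +
      (1 / 2 : ℝ≥0∞) • Measure.map (fun x => L * x + 1 - L) μ)
    (hdens : μ = volume.withDensity (fun x => ENNReal.ofReal (h x)))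
    (hL2 : MeasureTheory.MemLp h 2 volume) (a b : ℝ) :
    yy h a b ≤ 4⁻¹ * L⁻¹ *
      (Real.sqrt (yy h (a/L) (b/L)) + Real.sqrt (yy h ((a+L-1)/L) ((b+L-1)/L)))^2 := by
  have hstep := YEstep hL0 hL1 hmeas hprob hself hdens a b
  have hfin1 : YE h (a/L) (b/L) ≠ ⊤ := YE_fin hnn hL2 _ _
  have hfin2 : YE h ((a+L-1)/L) ((b+L-1)/L) ≠ ⊤ := YE_fin hnn hL2 _ _
  have hrfin : ENNReal.ofReal (4⁻¹ * L⁻¹) *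
      ((YE h (a/L) (b/L)) ^ (1/2:ℝ) + (YE h ((a+L-1)/L) ((b+L-1)/L)) ^ (1/2:ℝ)) ^ (2:ℝ) ≠ ⊤ := by
    apply ENNReal.mul_ne_top ENNReal.ofReal_ne_top
    apply (ENNReal.rpow_lt_top_of_nonneg (by norm_num) ?_).ne
    exact (ENNReal.add_lt_top.mpr ⟨ENNReal.rpow_lt_top_of_nonneg (by norm_num) hfin1,
      ENNReal.rpow_lt_top_of_nonneg (by norm_num) hfin2⟩).ne
  have := ENNReal.toReal_mono hrfin hstep
  unfold yy
  refine le_trans this (le_of_eq ?_)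
  rw [ENNReal.toReal_mul, ENNReal.toReal_ofReal (by positivity)]
  congr 1
  rw [← ENNReal.toReal_rpow, ENNReal.toReal_add
    (ENNReal.rpow_lt_top_of_nonneg (by norm_num) hfin1).ne
    (ENNReal.rpow_lt_top_of_nonneg (by norm_num) hfin2).ne,
    ← ENNReal.toReal_rpow, ← ENNReal.toReal_rpow]
  rw [← Real.rpow_natCast _ 2]
  push_cast
  rw [Real.sqrt_eq_rpow, Real.sqrt_eq_rpow]

end RealSide


section Scaling

/-- Bundle of all standing hypotheses. -/
structure Pack (L : ℝ) (μ : Measure ℝ) (h : ℝ → ℝ) : Prop where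
  hLhalf : 1/2 < L
  hL1 : L < 1
  hmeas : Measurable h
  hnn : ∀ x, 0 ≤ h x
  hprob : IsProbabilityMeasure μ
  h01 : μ (Set.Icc 0 1) = 1
  hself : μ = (1 / 2 : ℝ≥0∞) • Measure.map (fun x => L * x) μ +
      (1 / 2 : ℝ≥0∞) • Measure.map (fun x => L * x + 1 - L) μ
  hdens : μ = volume.withDensity (fun x => ENNReal.ofReal (h x))
  hL2 : MeasureTheory.MemLp h 2 volume

namespace Pack

variable (P : Pack L μ h)
include P

lemma hL0 : 0 < L := lt_trans (by norm_num) P.hLhalf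

lemma mm01 : mm μ 0 1 = 1 := by unfold mm; rw [P.h01]; simp

lemma mrec' (a b : ℝ) :
    mm μ a b = 2⁻¹ * mm μ (a/L) (b/L) + 2⁻¹ * mm μ ((a+L-1)/L) ((b+L-1)/L) :=
  mrec P.hprob P.hL0 P.hself a b

lemma mjunkL {c d : ℝ} (hd : d ≤ 0) : mm μ c d = 0 := by
  unfold mm
  rw [mu_junk_left P.hprob P.h01 P.hL0 P.hL1 P.hself hd]
  simp

lemma mjunkR {c d : ℝ} (hc : 1 ≤ c) : mm μ c d = 0 := by
  unfold mm
  rw [mu_junk_right P.hprob P.h01 P.hL0 P.hL1 P.hself hc]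
  simp

lemma mmono {a b c d : ℝ} (hca : c ≤ a) (hbd : b ≤ d) : mm μ a b ≤ mm μ c d :=
  mm_mono P.hprob hca hbd

lemma mnn (a b : ℝ) : 0 ≤ mm μ a b := mm_nonneg a b

lemma mle1 (a b : ℝ) : mm μ a b ≤ 1 := mm_le_one P.hprob a b

lemma mlowL : ∀ k : ℕ, ∀ u : ℝ, L^k ≤ u → (2⁻¹:ℝ)^k ≤ mm μ 0 u := by
  intro k
  induction k with
  | zero =>
    intro u hu
    simp only [pow_zero] at hu ⊢
    calc (1:ℝ) = mm μ 0 1 := (P.mm01).symm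
      _ ≤ mm μ 0 u := P.mmono le_rfl hu
  | succ k ih =>
    intro u hu
    have hL0 := P.hL0
    have h1 : L^k ≤ u / L := by
      rw [le_div_iff₀ hL0]
      calc L^k * L = L^(k+1) := by ring
        _ ≤ u := hu
    have := P.mrec' 0 u
    rw [zero_div] at this
    have h2 : (2⁻¹:ℝ)^k ≤ mm μ 0 (u/L) := ih _ h1
    have h3 : 0 ≤ mm μ ((0+L-1)/L) ((u+L-1)/L) := P.mnn _ _
    rw [this]
    calc (2⁻¹:ℝ)^(k+1) = 2⁻¹ * (2⁻¹)^k := by ring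
      _ ≤ 2⁻¹ * mm μ 0 (u/L) + 2⁻¹ * mm μ ((0+L-1)/L) ((u+L-1)/L) := by nlinarith
    
lemma mlowR : ∀ k : ℕ, ∀ u : ℝ, L^k ≤ u → (2⁻¹:ℝ)^k ≤ mm μ (1-u) 1 := by
  intro k
  induction k with
  | zero =>
    intro u hu
    simp only [pow_zero] at hu ⊢
    calc (1:ℝ) = mm μ 0 1 := (P.mm01).symm
      _ ≤ mm μ (1-u) 1 := P.mmono (by linarith) le_rfl
  | succ k ih =>
    intro u hu
    have hL0 := P.hL0
    have h1 : L^k ≤ u / L := by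
      rw [le_div_iff₀ hL0]
      calc L^k * L = L^(k+1) := by ring
        _ ≤ u := hu
    have hrec := P.mrec' (1-u) 1
    have e1 : (1 - u + L - 1)/L = 1 - u/L := by field_simp; ring
    have e2 : (1 + L - 1)/L = 1 := by field_simp; ring
    rw [e1, e2] at hrec
    have h2 : (2⁻¹:ℝ)^k ≤ mm μ (1 - u/L) 1 := ih _ h1
    have h3 : 0 ≤ mm μ ((1-u)/L) (1/L) := P.mnn _ _
    rw [hrec]
    calc (2⁻¹:ℝ)^(k+1) = 2⁻¹ * (2⁻¹)^k := by ring
      _ ≤ 2⁻¹ * mm μ ((1-u)/L) (1/L) + 2⁻¹ * mm μ (1 - u/L) 1 := by nlinarith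

lemma mupL {u : ℝ} (hu : u ≤ 1 - L) : mm μ 0 u = 2⁻¹ * mm μ 0 (u/L) := by
  have hL0 := P.hL0
  have hrec := P.mrec' 0 u
  rw [zero_div] at hrec
  have hz : mm μ ((0+L-1)/L) ((u+L-1)/L) = 0 := by
    apply P.mjunkL
    apply div_nonpos_of_nonpos_of_nonneg (by linarith) (le_of_lt hL0)
  rw [hz, mul_zero, add_zero] at hrec
  exact hrec

lemma mupR {u : ℝ} (hu : u ≤ 1 - L) : mm μ (1-u) 1 = 2⁻¹ * mm μ (1 - u/L) 1 := by
  have hL0 := P.hL0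
  have hrec := P.mrec' (1-u) 1
  have e1 : (1 - u + L - 1)/L = 1 - u/L := by field_simp; ring
  have e2 : (1 + L - 1)/L = 1 := by field_simp; ring
  rw [e1, e2] at hrec
  have hz : mm μ ((1-u)/L) (1/L) = 0 := by
    apply P.mjunkR
    rw [le_div_iff₀ hL0]
    linarith
  rw [hz, mul_zero, zero_add] at hrec
  exact hrec

lemma mupL' (M0 : ℕ) (hM0 : L^(M0+1) ≤ 1 - L) :
    ∀ m : ℕ, ∀ u : ℝ, u ≤ L^m → mm μ 0 u ≤ 2^(M0+1) * (2⁻¹:ℝ)^m := by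
  intro m
  induction m with
  | zero =>
    intro u _
    simp only [pow_zero, mul_one]
    calc mm μ 0 u ≤ 1 := P.mle1 _ _
      _ ≤ 2^(M0+1) := one_le_pow₀ (by norm_num)
  | succ m ih =>
    intro u hu
    have hL0 := P.hL0
    by_cases hm : m + 1 ≤ M0 + 1
    · calc mm μ 0 u ≤ 1 := P.mle1 _ _
        _ ≤ 2^(M0+1) * (2⁻¹:ℝ)^(m+1) := by
          have h2 : (2:ℝ)^(m+1) ≤ 2^(M0+1) := pow_le_pow_right₀ (by norm_num) hm
          have h3 : (0:ℝ) < 2^(m+1) := by positivity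
          rw [show (2⁻¹:ℝ)^(m+1) = ((2:ℝ)^(m+1))⁻¹ from by rw [inv_pow]]
          calc (1:ℝ) = 2^(m+1) * (2^(m+1))⁻¹ := by field_simp
            _ ≤ 2^(M0+1) * (2^(m+1))⁻¹ := by
                apply mul_le_mul_of_nonneg_right h2 (by positivity)
    · push_neg at hm
      have hmM : M0 + 1 ≤ m := by omega
      have hus : u ≤ 1 - L := by
        calc u ≤ L^(m+1) := hu
          _ ≤ L^(M0+1) := pow_le_pow_of_le_one (le_of_lt hL0) (le_of_lt P.hL1) (by omega)
          _ ≤ 1 - L := hM0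
      rw [P.mupL hus]
      have h1 : u / L ≤ L^m := by
        rw [div_le_iff₀ hL0]
        calc u ≤ L^(m+1) := hu
          _ = L^m * L := by ring
      calc 2⁻¹ * mm μ 0 (u/L) ≤ 2⁻¹ * (2^(M0+1) * (2⁻¹:ℝ)^m) := by
            have := ih _ h1
            nlinarith
        _ = 2^(M0+1) * (2⁻¹:ℝ)^(m+1) := by ring

lemma mupR' (M0 : ℕ) (hM0 : L^(M0+1) ≤ 1 - L) :
    ∀ m : ℕ, ∀ u : ℝ, u ≤ L^m → mm μ (1-u) 1 ≤ 2^(M0+1) * (2⁻¹:ℝ)^m := by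
  intro m
  induction m with
  | zero =>
    intro u _
    simp only [pow_zero, mul_one]
    calc mm μ (1-u) 1 ≤ 1 := P.mle1 _ _
      _ ≤ 2^(M0+1) := one_le_pow₀ (by norm_num)
  | succ m ih =>
    intro u hu
    have hL0 := P.hL0
    by_cases hm : m + 1 ≤ M0 + 1
    · calc mm μ (1-u) 1 ≤ 1 := P.mle1 _ _
        _ ≤ 2^(M0+1) * (2⁻¹:ℝ)^(m+1) := by
          have h2 : (2:ℝ)^(m+1) ≤ 2^(M0+1) := pow_le_pow_right₀ (by norm_num) hm
          have h3 : (0:ℝ) < 2^(m+1) := by positivity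
          rw [show (2⁻¹:ℝ)^(m+1) = ((2:ℝ)^(m+1))⁻¹ from by rw [inv_pow]]
          calc (1:ℝ) = 2^(m+1) * (2^(m+1))⁻¹ := by field_simp
            _ ≤ 2^(M0+1) * (2^(m+1))⁻¹ := by
                apply mul_le_mul_of_nonneg_right h2 (by positivity)
    · push_neg at hm
      have hus : u ≤ 1 - L := by
        calc u ≤ L^(m+1) := hu
          _ ≤ L^(M0+1) := pow_le_pow_of_le_one (le_of_lt hL0) (le_of_lt P.hL1) (by omega)
          _ ≤ 1 - L := hM0
      rw [P.mupR hus]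
      have h1 : u / L ≤ L^m := by
        rw [div_le_iff₀ hL0]
        calc u ≤ L^(m+1) := hu
          _ = L^m * L := by ring
      calc 2⁻¹ * mm μ (1 - u/L) 1 ≤ 2⁻¹ * (2^(M0+1) * (2⁻¹:ℝ)^m) := by
            have := ih _ h1
            nlinarith
        _ = 2^(M0+1) * (2⁻¹:ℝ)^(m+1) := by ring

lemma gap (k5 : ℕ) (hk5 : L^k5 ≤ (2*L-1)/L) :
    ∀ k : ℕ, ∀ a b : ℝ, 0 ≤ a → b ≤ 1 → L^k ≤ b - a →
      (2⁻¹:ℝ)^(k5+1) * (2⁻¹)^k ≤ mm μ a b := by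
  intro k
  induction k with
  | zero =>
    intro a b ha hb hab
    simp only [pow_zero] at hab
    have ha0 : a = 0 := le_antisymm (by linarith) ha
    have hb1 : b = 1 := le_antisymm hb (by linarith)
    rw [ha0, hb1, P.mm01, pow_succ]
    have h1 : ((2:ℝ)⁻¹)^(k5) ≤ 1 := pow_le_one₀ (by norm_num) (by norm_num)
    nlinarith
  | succ k ih =>
    intro a b ha hb hab
    have hL0 := P.hL0
    have hlen : L^k ≤ (b-a)/L := by
      rw [le_div_iff₀ hL0]
      calc L^k * L = L^(k+1) := by ring
        _ ≤ b - a := hab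
    by_cases hbL : b ≤ L
    · have hrec := P.mrec' a b
      have h1 : (2⁻¹:ℝ)^(k5+1) * (2⁻¹)^k ≤ mm μ (a/L) (b/L) := by
        apply ih
        · positivity
        · rw [div_le_one hL0]; exact hbL
        · calc L^k ≤ (b-a)/L := hlen
            _ = b/L - a/L := by ring
      have h2 : 0 ≤ mm μ ((a+L-1)/L) ((b+L-1)/L) := P.mnn _ _
      rw [hrec]
      calc (2⁻¹:ℝ)^(k5+1) * (2⁻¹)^(k+1) = 2⁻¹ * ((2⁻¹:ℝ)^(k5+1) * (2⁻¹)^k) := by ring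
        _ ≤ 2⁻¹ * mm μ (a/L) (b/L) + 2⁻¹ * mm μ ((a+L-1)/L) ((b+L-1)/L) := by nlinarith
    · push_neg at hbL
      by_cases haL : 1 - L ≤ a
      · have hrec := P.mrec' a b
        have h1 : (2⁻¹:ℝ)^(k5+1) * (2⁻¹)^k ≤ mm μ ((a+L-1)/L) ((b+L-1)/L) := by
          apply ih
          · apply div_nonneg (by linarith) (le_of_lt hL0)
          · rw [div_le_one hL0]; linarith
          · calc L^k ≤ (b-a)/L := hlen
              _ = (b+L-1)/L - (a+L-1)/L := by ring
        have h2 : 0 ≤ mm μ (a/L) (b/L) := P.mnn _ _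
        rw [hrec]
        calc (2⁻¹:ℝ)^(k5+1) * (2⁻¹)^(k+1) = 2⁻¹ * ((2⁻¹:ℝ)^(k5+1) * (2⁻¹)^k) := by ring
          _ ≤ 2⁻¹ * mm μ (a/L) (b/L) + 2⁻¹ * mm μ ((a+L-1)/L) ((b+L-1)/L) := by nlinarith
      · push_neg at haL
        have hrec := P.mrec' a b
        have h1 : (2⁻¹:ℝ)^k5 ≤ mm μ ((a+L-1)/L) ((b+L-1)/L) := by
          calc (2⁻¹:ℝ)^k5 ≤ mm μ 0 ((b+L-1)/L) := by
                apply P.mlowL k5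
                calc L^k5 ≤ (2*L-1)/L := hk5
                  _ ≤ (b+L-1)/L := by
                    gcongr
                    linarith
            _ ≤ mm μ ((a+L-1)/L) ((b+L-1)/L) := by
                apply P.mmono ?_ le_rfl
                apply div_nonpos_of_nonpos_of_nonneg (by linarith) (le_of_lt hL0)
        have h2 : 0 ≤ mm μ (a/L) (b/L) := P.mnn _ _
        rw [hrec]
        calc (2⁻¹:ℝ)^(k5+1) * (2⁻¹)^(k+1) ≤ (2⁻¹:ℝ)^(k5+1) := by
              have hle1 : (2⁻¹:ℝ)^(k+1) ≤ 1 := pow_le_one₀ (by norm_num) (by norm_num)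
              nlinarith [pow_nonneg (by norm_num : (0:ℝ) ≤ 2⁻¹) (k5+1)]
          _ = 2⁻¹ * (2⁻¹:ℝ)^k5 := by ring
          _ ≤ 2⁻¹ * mm μ ((a+L-1)/L) ((b+L-1)/L) := by nlinarith
          _ ≤ 2⁻¹ * mm μ (a/L) (b/L) + 2⁻¹ * mm μ ((a+L-1)/L) ((b+L-1)/L) := by nlinarith

end Pack

end Scaling

noncomputable def ytot (h : ℝ → ℝ) : ℝ := (∫⁻ x, HH h x ^ (2:ℝ)).toReal

namespace Pack

variable (P : Pack L μ h)
include P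

lemma ytrunc (a b : ℝ) : yy h a b = yy h (max a 0) (min b 1) :=
  yy_trunc P.hmeas P.hprob P.h01 P.hdens a b

lemma ymono {a b c d : ℝ} (hca : c ≤ a) (hbd : b ≤ d) : yy h a b ≤ yy h c d :=
  yy_mono P.hnn P.hL2 hca hbd

lemma ynn (a b : ℝ) : 0 ≤ yy h a b := yy_nonneg a b

lemma yle (a b : ℝ) : yy h a b ≤ ytot h :=
  ENNReal.toReal_mono (YEtot_fin P.hnn P.hL2) (YE_le_tot a b)

lemma ytotnn : 0 ≤ ytot h := ENNReal.toReal_nonneg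

lemma ystepP (a b : ℝ) : yy h a b ≤ 4⁻¹ * L⁻¹ *
    (Real.sqrt (yy h (a/L) (b/L)) + Real.sqrt (yy h ((a+L-1)/L) ((b+L-1)/L)))^2 :=
  ystep P.hL0 P.hL1 P.hmeas P.hnn P.hprob P.hself P.hdens P.hL2 a b

lemma rb_base (M0 : ℕ) {m : ℕ} {u : ℝ} (hm : m ≤ M0) (hu : L^(m+1) < u) :
    yy h (1-u) 1 ≤ (ytot h * 4^(M0+1)) * ((L^m)⁻¹) * (mm μ (1-u) 1)^2 := by
  have hL0 := P.hL0
  have hmm : (2⁻¹:ℝ)^(M0+1) ≤ mm μ (1-u) 1 := by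
    apply P.mlowR
    calc L^(M0+1) ≤ L^(m+1) :=
          pow_le_pow_of_le_one (le_of_lt hL0) (le_of_lt P.hL1) (by omega)
      _ ≤ u := le_of_lt hu
  have hLm1 : (1:ℝ) ≤ (L^m)⁻¹ := by
    have h1 : L^m ≤ 1 := pow_le_one₀ (le_of_lt hL0) (le_of_lt P.hL1)
    have h2 : (0:ℝ) < L^m := by positivity
    rw [show (1:ℝ) = (1:ℝ)⁻¹ from by norm_num]
    exact inv_anti₀ h2 h1
  have h4 : (4:ℝ)^(M0+1) * ((2⁻¹:ℝ)^(M0+1))^2 = 1 := by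
    rw [← pow_mul, mul_comm (M0+1) 2, pow_mul, show ((2⁻¹:ℝ)^2) = (4:ℝ)⁻¹ from by norm_num,
      ← mul_pow]
    norm_num
  have hmnn : 0 ≤ mm μ (1-u) 1 := P.mnn _ _
  calc yy h (1-u) 1 ≤ ytot h := P.yle _ _
    _ = ytot h * (4^(M0+1) * ((2⁻¹:ℝ)^(M0+1))^2) := by rw [h4, mul_one]
    _ ≤ ytot h * (4^(M0+1) * (mm μ (1-u) 1)^2) := by
        apply mul_le_mul_of_nonneg_left ?_ P.ytotnn
        apply mul_le_mul_of_nonneg_left ?_ (by positivity)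
        exact pow_le_pow_left₀ (by positivity) hmm 2
    _ = (ytot h * 4^(M0+1)) * 1 * (mm μ (1-u) 1)^2 := by ring
    _ ≤ (ytot h * 4^(M0+1)) * ((L^m)⁻¹) * (mm μ (1-u) 1)^2 := by
        apply mul_le_mul_of_nonneg_right ?_ (by positivity)
        apply mul_le_mul_of_nonneg_left hLm1 (mul_nonneg P.ytotnn (by positivity))

lemma rb (M0 : ℕ) (hM0 : L^(M0+1) ≤ 1 - L) :
    ∀ m : ℕ, ∀ u : ℝ, L^(m+1) < u →
      yy h (1-u) 1 ≤ (ytot h * 4^(M0+1)) * ((L^m)⁻¹) * (mm μ (1-u) 1)^2 := by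
  intro m
  induction m with
  | zero => exact fun u hu => P.rb_base M0 (Nat.zero_le _) hu
  | succ m ih =>
    intro u hu
    have hL0 := P.hL0
    by_cases hm : m + 1 ≤ M0
    · exact P.rb_base M0 hm hu
    · push_neg at hm
      by_cases hu2 : L^(m+1) < u
      · calc yy h (1-u) 1 ≤ (ytot h * 4^(M0+1)) * ((L^m)⁻¹) * (mm μ (1-u) 1)^2 := ih u hu2
          _ ≤ (ytot h * 4^(M0+1)) * ((L^(m+1))⁻¹) * (mm μ (1-u) 1)^2 := by
              apply mul_le_mul_of_nonneg_right ?_ (by positivity)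
              apply mul_le_mul_of_nonneg_left ?_ (mul_nonneg P.ytotnn (by positivity))
              apply inv_anti₀ (by positivity)
              calc L^(m+1) = L^m * L := by ring
                _ ≤ L^m * 1 := by
                    apply mul_le_mul_of_nonneg_left (le_of_lt P.hL1) (by positivity)
                _ = L^m := by ring
      · push_neg at hu2
        have hus : u ≤ 1 - L := by
          calc u ≤ L^(m+1) := hu2
            _ ≤ L^(M0+1) := pow_le_pow_of_le_one (le_of_lt hL0) (le_of_lt P.hL1) (by omega)
            _ ≤ 1 - L := hM0
        have hupos : 0 < u := lt_trans (by positivity) hu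
        -- the step
        have hstep := P.ystepP (1-u) 1
        have e1 : (1 - u + L - 1)/L = 1 - u/L := by field_simp; ring
        have e2 : (1 + L - 1)/L = 1 := by field_simp; ring
        rw [e1, e2] at hstep
        have hy1 : yy h ((1-u)/L) (1/L) = 0 := by
          rw [P.ytrunc]
          apply yy_empty
          calc min (1/L) 1 ≤ 1 := min_le_right _ _
            _ ≤ (1-u)/L := by
                rw [le_div_iff₀ hL0]; linarith
            _ ≤ max ((1-u)/L) 0 := le_max_left _ _
        rw [hy1, Real.sqrt_zero, zero_add] at hstep
        rw [Real.sq_sqrt (P.ynn _ _)] at hstep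
        have hIH : yy h (1 - u/L) 1
            ≤ (ytot h * 4^(M0+1)) * ((L^m)⁻¹) * (mm μ (1 - u/L) 1)^2 := by
          apply ih
          rw [lt_div_iff₀ hL0]
          calc L^(m+1) * L = L^(m+2) := by ring
            _ < u := hu
        have hmup : mm μ (1 - u/L) 1 = 2 * mm μ (1-u) 1 := by
          have := P.mupR hus
          linarith
        rw [hmup] at hIH
        calc yy h (1-u) 1 ≤ 4⁻¹ * L⁻¹ * yy h (1 - u/L) 1 := hstep
          _ ≤ 4⁻¹ * L⁻¹ * ((ytot h * 4^(M0+1)) * ((L^m)⁻¹) * (2 * mm μ (1-u) 1)^2) := by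
              apply mul_le_mul_of_nonneg_left hIH (by positivity)
          _ = (ytot h * 4^(M0+1)) * (L⁻¹ * (L^m)⁻¹) * (mm μ (1-u) 1)^2 := by ring
          _ = (ytot h * 4^(M0+1)) * ((L^(m+1))⁻¹) * (mm μ (1-u) 1)^2 := by
              rw [pow_succ L m, mul_inv]
              ring

lemma lb_base (M0 : ℕ) {m : ℕ} {u : ℝ} (hm : m ≤ M0) (hu : L^(m+1) < u) :
    yy h 0 u ≤ (ytot h * 4^(M0+1)) * ((L^m)⁻¹) * (mm μ 0 u)^2 := by
  have hL0 := P.hL0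
  have hmm : (2⁻¹:ℝ)^(M0+1) ≤ mm μ 0 u := by
    apply P.mlowL
    calc L^(M0+1) ≤ L^(m+1) :=
          pow_le_pow_of_le_one (le_of_lt hL0) (le_of_lt P.hL1) (by omega)
      _ ≤ u := le_of_lt hu
  have hLm1 : (1:ℝ) ≤ (L^m)⁻¹ := by
    have h1 : L^m ≤ 1 := pow_le_one₀ (le_of_lt hL0) (le_of_lt P.hL1)
    have h2 : (0:ℝ) < L^m := by positivity
    rw [show (1:ℝ) = (1:ℝ)⁻¹ from by norm_num]
    exact inv_anti₀ h2 h1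
  have h4 : (4:ℝ)^(M0+1) * ((2⁻¹:ℝ)^(M0+1))^2 = 1 := by
    rw [← pow_mul, mul_comm (M0+1) 2, pow_mul, show ((2⁻¹:ℝ)^2) = (4:ℝ)⁻¹ from by norm_num,
      ← mul_pow]
    norm_num
  have hmnn : 0 ≤ mm μ 0 u := P.mnn _ _
  calc yy h 0 u ≤ ytot h := P.yle _ _
    _ = ytot h * (4^(M0+1) * ((2⁻¹:ℝ)^(M0+1))^2) := by rw [h4, mul_one]
    _ ≤ ytot h * (4^(M0+1) * (mm μ 0 u)^2) := by
        apply mul_le_mul_of_nonneg_left ?_ P.ytotnn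
        apply mul_le_mul_of_nonneg_left ?_ (by positivity)
        exact pow_le_pow_left₀ (by positivity) hmm 2
    _ = (ytot h * 4^(M0+1)) * 1 * (mm μ 0 u)^2 := by ring
    _ ≤ (ytot h * 4^(M0+1)) * ((L^m)⁻¹) * (mm μ 0 u)^2 := by
        apply mul_le_mul_of_nonneg_right ?_ (by positivity)
        apply mul_le_mul_of_nonneg_left hLm1 (mul_nonneg P.ytotnn (by positivity))

lemma lb (M0 : ℕ) (hM0 : L^(M0+1) ≤ 1 - L) :
    ∀ m : ℕ, ∀ u : ℝ, L^(m+1) < u →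
      yy h 0 u ≤ (ytot h * 4^(M0+1)) * ((L^m)⁻¹) * (mm μ 0 u)^2 := by
  intro m
  induction m with
  | zero => exact fun u hu => P.lb_base M0 (Nat.zero_le _) hu
  | succ m ih =>
    intro u hu
    have hL0 := P.hL0
    by_cases hm : m + 1 ≤ M0
    · exact P.lb_base M0 hm hu
    · push_neg at hm
      by_cases hu2 : L^(m+1) < u
      · calc yy h 0 u ≤ (ytot h * 4^(M0+1)) * ((L^m)⁻¹) * (mm μ 0 u)^2 := ih u hu2
          _ ≤ (ytot h * 4^(M0+1)) * ((L^(m+1))⁻¹) * (mm μ 0 u)^2 := by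
              apply mul_le_mul_of_nonneg_right ?_ (by positivity)
              apply mul_le_mul_of_nonneg_left ?_ (mul_nonneg P.ytotnn (by positivity))
              apply inv_anti₀ (by positivity)
              calc L^(m+1) = L^m * L := by ring
                _ ≤ L^m * 1 := by
                    apply mul_le_mul_of_nonneg_left (le_of_lt P.hL1) (by positivity)
                _ = L^m := by ring
      · push_neg at hu2
        have hus : u ≤ 1 - L := by
          calc u ≤ L^(m+1) := hu2
            _ ≤ L^(M0+1) := pow_le_pow_of_le_one (le_of_lt hL0) (le_of_lt P.hL1) (by omega)
            _ ≤ 1 - L := hM0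
        have hstep := P.ystepP 0 u
        rw [zero_div] at hstep
        have hy2 : yy h ((0+L-1)/L) ((u+L-1)/L) = 0 := by
          rw [P.ytrunc]
          apply yy_empty
          calc min ((u+L-1)/L) 1 ≤ (u+L-1)/L := min_le_left _ _
            _ ≤ 0 := div_nonpos_of_nonpos_of_nonneg (by linarith) (le_of_lt hL0)
            _ ≤ max ((0+L-1)/L) 0 := le_max_right _ _
        rw [hy2, Real.sqrt_zero, add_zero] at hstep
        rw [Real.sq_sqrt (P.ynn _ _)] at hstep
        have hIH : yy h 0 (u/L)
            ≤ (ytot h * 4^(M0+1)) * ((L^m)⁻¹) * (mm μ 0 (u/L))^2 := by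
          apply ih
          rw [lt_div_iff₀ hL0]
          calc L^(m+1) * L = L^(m+2) := by ring
            _ < u := hu
        have hmup : mm μ 0 (u/L) = 2 * mm μ 0 u := by
          have := P.mupL hus
          linarith
        rw [hmup] at hIH
        calc yy h 0 u ≤ 4⁻¹ * L⁻¹ * yy h 0 (u/L) := hstep
          _ ≤ 4⁻¹ * L⁻¹ * ((ytot h * 4^(M0+1)) * ((L^m)⁻¹) * (2 * mm μ 0 u)^2) := by
              apply mul_le_mul_of_nonneg_left hIH (by positivity)
          _ = (ytot h * 4^(M0+1)) * (L⁻¹ * (L^m)⁻¹) * (mm μ 0 u)^2 := by ring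
          _ = (ytot h * 4^(M0+1)) * ((L^(m+1))⁻¹) * (mm μ 0 u)^2 := by
              rw [pow_succ L m, mul_inv]
              ring

end Pack

section MainInduction

lemma sqrt_le_of_sq {x A : ℝ} (hA : 0 ≤ A) (hx : x ≤ A^2) : Real.sqrt x ≤ A := by
  calc Real.sqrt x ≤ Real.sqrt (A^2) := Real.sqrt_le_sqrt hx
    _ = A := Real.sqrt_sq hA

lemma scale_exists (hL0 : 0 < L) (hL1 : L < 1) {v : ℝ} (hv : 0 < v) (hv1 : v ≤ 1) :
    ∃ m' : ℕ, L^(m'+1) < v ∧ v ≤ L^(m') := by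
  have hex : ∃ j : ℕ, L^(j+1) < v := by
    obtain ⟨j, hj⟩ := exists_pow_lt_of_lt_one hv hL1
    exact ⟨j, lt_of_le_of_lt
      (pow_le_pow_of_le_one (le_of_lt hL0) (le_of_lt hL1) (by omega)) hj⟩
  classical
  refine ⟨Nat.find hex, Nat.find_spec hex, ?_⟩
  rcases Nat.eq_zero_or_pos (Nat.find hex) with h0 | hpos
  · rw [h0, pow_zero]; exact hv1
  · have hmin := Nat.find_min hex (m := Nat.find hex - 1) (by omega)
    push_neg at hmin
    have : v ≤ L^(Nat.find hex - 1 + 1) := hmin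
    rwa [show Nat.find hex - 1 + 1 = Nat.find hex from by omega] at this

namespace Pack

variable (P : Pack L μ h)
include P

/-- Bound for a bad (short, boundary-touching) right child. -/
lemma badR (M0 : ℕ) (hM0 : L^(M0+1) ≤ 1 - L) (n : ℕ) {u : ℝ} (hu0 : 0 < u)
    (hu : u ≤ L^(n+1)) :
    yy h (1-u) 1 ≤ (ytot h * 4^(M0+1)) * ((2:ℝ)^(M0+1))^2 * ((4*L)⁻¹)^(n+1) := by
  have hL0 := P.hL0
  have hu1 : u ≤ 1 := le_trans hu (pow_le_one₀ (le_of_lt hL0) (le_of_lt P.hL1))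
  obtain ⟨m', hm1, hm2⟩ := scale_exists hL0 P.hL1 hu0 hu1
  have hnm : n + 1 ≤ m' := by
    by_contra hc
    push_neg at hc
    have : L^(n+1) ≤ L^(m'+1) :=
      pow_le_pow_of_le_one (le_of_lt hL0) (le_of_lt P.hL1) (by omega)
    linarith
  have h1 := P.rb M0 hM0 m' u hm1
  have h2 : mm μ (1-u) 1 ≤ 2^(M0+1) * (2⁻¹:ℝ)^m' := P.mupR' M0 hM0 m' u hm2
  have h3 : (mm μ (1-u) 1)^2 ≤ (2^(M0+1) * (2⁻¹:ℝ)^m')^2 :=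
    pow_le_pow_left₀ (P.mnn _ _) h2 2
  have hq1 : ((L^m')⁻¹) * (2^(M0+1) * (2⁻¹:ℝ)^m')^2 = ((2:ℝ)^(M0+1))^2 * ((4*L)⁻¹)^m' := by
    have e4 : ((2⁻¹:ℝ)^m')^2 = ((4⁻¹:ℝ))^m' := by
      rw [← pow_mul, mul_comm m' 2, pow_mul]
      norm_num
    rw [mul_pow, e4, mul_inv, mul_pow, ← inv_pow L m']
    ring
  have hq2 : ((4*L)⁻¹:ℝ)^m' ≤ ((4*L)⁻¹)^(n+1) := by
    apply pow_le_pow_of_le_one (by positivity) ?_ hnm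
    rw [inv_le_one_iff₀]
    right
    nlinarith [P.hLhalf]
  calc yy h (1-u) 1 ≤ (ytot h * 4^(M0+1)) * ((L^m')⁻¹) * (mm μ (1-u) 1)^2 := h1
    _ ≤ (ytot h * 4^(M0+1)) * ((L^m')⁻¹) * (2^(M0+1) * (2⁻¹:ℝ)^m')^2 := by
        apply mul_le_mul_of_nonneg_left h3
        exact mul_nonneg (mul_nonneg P.ytotnn (by positivity)) (by positivity)
    _ = (ytot h * 4^(M0+1)) * (((L^m')⁻¹) * (2^(M0+1) * (2⁻¹:ℝ)^m')^2) := by ring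
    _ = (ytot h * 4^(M0+1)) * (((2:ℝ)^(M0+1))^2 * ((4*L)⁻¹)^m') := by rw [hq1]
    _ ≤ (ytot h * 4^(M0+1)) * (((2:ℝ)^(M0+1))^2 * ((4*L)⁻¹)^(n+1)) := by
        apply mul_le_mul_of_nonneg_left ?_ (mul_nonneg P.ytotnn (by positivity))
        exact mul_le_mul_of_nonneg_left hq2 (by positivity)
    _ = (ytot h * 4^(M0+1)) * ((2:ℝ)^(M0+1))^2 * ((4*L)⁻¹)^(n+1) := by ring

lemma badL (M0 : ℕ) (hM0 : L^(M0+1) ≤ 1 - L) (n : ℕ) {v : ℝ} (hv0 : 0 < v)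
    (hv : v ≤ L^(n+1)) :
    yy h 0 v ≤ (ytot h * 4^(M0+1)) * ((2:ℝ)^(M0+1))^2 * ((4*L)⁻¹)^(n+1) := by
  have hL0 := P.hL0
  have hv1 : v ≤ 1 := le_trans hv (pow_le_one₀ (le_of_lt hL0) (le_of_lt P.hL1))
  obtain ⟨m', hm1, hm2⟩ := scale_exists hL0 P.hL1 hv0 hv1
  have hnm : n + 1 ≤ m' := by
    by_contra hc
    push_neg at hc
    have : L^(n+1) ≤ L^(m'+1) :=
      pow_le_pow_of_le_one (le_of_lt hL0) (le_of_lt P.hL1) (by omega)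
    linarith
  have h1 := P.lb M0 hM0 m' v hm1
  have h2 : mm μ 0 v ≤ 2^(M0+1) * (2⁻¹:ℝ)^m' := P.mupL' M0 hM0 m' v hm2
  have h3 : (mm μ 0 v)^2 ≤ (2^(M0+1) * (2⁻¹:ℝ)^m')^2 :=
    pow_le_pow_left₀ (P.mnn _ _) h2 2
  have hq1 : ((L^m')⁻¹) * (2^(M0+1) * (2⁻¹:ℝ)^m')^2 = ((2:ℝ)^(M0+1))^2 * ((4*L)⁻¹)^m' := by
    have e4 : ((2⁻¹:ℝ)^m')^2 = ((4⁻¹:ℝ))^m' := by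
      rw [← pow_mul, mul_comm m' 2, pow_mul]
      norm_num
    rw [mul_pow, e4, mul_inv, mul_pow, ← inv_pow L m']
    ring
  have hq2 : ((4*L)⁻¹:ℝ)^m' ≤ ((4*L)⁻¹)^(n+1) := by
    apply pow_le_pow_of_le_one (by positivity) ?_ hnm
    rw [inv_le_one_iff₀]
    right
    nlinarith [P.hLhalf]
  calc yy h 0 v ≤ (ytot h * 4^(M0+1)) * ((L^m')⁻¹) * (mm μ 0 v)^2 := h1
    _ ≤ (ytot h * 4^(M0+1)) * ((L^m')⁻¹) * (2^(M0+1) * (2⁻¹:ℝ)^m')^2 := by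
        apply mul_le_mul_of_nonneg_left h3
        exact mul_nonneg (mul_nonneg P.ytotnn (by positivity)) (by positivity)
    _ = (ytot h * 4^(M0+1)) * (((L^m')⁻¹) * (2^(M0+1) * (2⁻¹:ℝ)^m')^2) := by ring
    _ = (ytot h * 4^(M0+1)) * (((2:ℝ)^(M0+1))^2 * ((4*L)⁻¹)^m') := by rw [hq1]
    _ ≤ (ytot h * 4^(M0+1)) * (((2:ℝ)^(M0+1))^2 * ((4*L)⁻¹)^(n+1)) := by
        apply mul_le_mul_of_nonneg_left ?_ (mul_nonneg P.ytotnn (by positivity))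
        exact mul_le_mul_of_nonneg_left hq2 (by positivity)
    _ = (ytot h * 4^(M0+1)) * ((2:ℝ)^(M0+1))^2 * ((4*L)⁻¹)^(n+1) := by ring

/-- In the bad case, the square-root bound against the measure lower bound. -/
lemma bad_sqrt (M0 k5 : ℕ) (σ C : ℝ) (hσ : 1 < σ) (hC0 : 0 ≤ C)
    (hC2 : (ytot h * 4^(M0+1)) * ((2:ℝ)^(M0+1))^2 ≤
      C * (((2⁻¹:ℝ)^(k5+1))^2 * (Real.sqrt σ - 1)^2))
    (n : ℕ) {m y : ℝ} (hm : (2⁻¹:ℝ)^(k5+1) * (2⁻¹)^(n+2) ≤ m)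
    (hy : y ≤ (ytot h * 4^(M0+1)) * ((2:ℝ)^(M0+1))^2 * ((4*L)⁻¹)^(n+1)) :
    Real.sqrt y ≤ 2*(Real.sqrt σ - 1) * Real.sqrt (C*(σ/L)^(n+1)) * m := by
  have hL0 := P.hL0
  have hσ0 : (0:ℝ) < σ := by linarith
  have hs1 : (1:ℝ) < Real.sqrt σ := by
    rw [show (1:ℝ) = Real.sqrt 1 from (Real.sqrt_one).symm]
    exact Real.sqrt_lt_sqrt (by norm_num) hσ
  have hmn : (0:ℝ) ≤ m := le_trans (by positivity) hm
  set G := Real.sqrt (C*(σ/L)^(n+1)) with hG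
  have hGnn : 0 ≤ G := Real.sqrt_nonneg _
  have hG2 : G^2 = C*(σ/L)^(n+1) := Real.sq_sqrt (by positivity)
  apply sqrt_le_of_sq (mul_nonneg (mul_nonneg (by nlinarith) hGnn) hmn)
  have hθ : ((L:ℝ)⁻¹)^(n+1) ≤ (σ/L)^(n+1) := by
    apply pow_le_pow_left₀ (by positivity)
    rw [div_eq_mul_inv]
    nlinarith [inv_pos.mpr hL0]
  have hm2 : ((2⁻¹:ℝ)^(k5+1) * (2⁻¹)^(n+2))^2 ≤ m^2 := pow_le_pow_left₀ (by positivity) hm 2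
  calc y ≤ (ytot h * 4^(M0+1)) * ((2:ℝ)^(M0+1))^2 * ((4*L)⁻¹)^(n+1) := hy
    _ ≤ C * (((2⁻¹:ℝ)^(k5+1))^2 * (Real.sqrt σ - 1)^2) * ((4*L)⁻¹)^(n+1) := by
        apply mul_le_mul_of_nonneg_right hC2 (by positivity)
    _ = 4*(Real.sqrt σ - 1)^2 * (C * ((L:ℝ)⁻¹)^(n+1)) *
          ((2⁻¹:ℝ)^(k5+1) * (2⁻¹)^(n+2))^2 := by
        rw [mul_pow ((2⁻¹:ℝ)^(k5+1)) ((2⁻¹:ℝ)^(n+2))]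
        have e1 : ((4*L)⁻¹:ℝ)^(n+1) = (4⁻¹:ℝ)^(n+1) * ((L:ℝ)⁻¹)^(n+1) := by
          rw [mul_inv, mul_pow]
        have e2 : (((2⁻¹:ℝ))^(n+2))^2 = (4⁻¹:ℝ)^(n+2) := by
          rw [← pow_mul, mul_comm (n+2) 2, pow_mul]
          norm_num
        rw [e1, e2, pow_succ (4⁻¹:ℝ) (n+1)]
        ring
    _ ≤ 4*(Real.sqrt σ - 1)^2 * (C * (σ/L)^(n+1)) *
          ((2⁻¹:ℝ)^(k5+1) * (2⁻¹)^(n+2))^2 := by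
        apply mul_le_mul_of_nonneg_right ?_ (by positivity)
        apply mul_le_mul_of_nonneg_left ?_ (by positivity)
        exact mul_le_mul_of_nonneg_left hθ hC0
    _ ≤ 4*(Real.sqrt σ - 1)^2 * (C * (σ/L)^(n+1)) * m^2 := by
        apply mul_le_mul_of_nonneg_left hm2
        have : (0:ℝ) ≤ C * (σ/L)^(n+1) := by positivity
        nlinarith
    _ = (2*(Real.sqrt σ - 1) * G * m)^2 := by
        rw [← hG2]
        ring

end Pack

end MainInduction

lemma comb_gg {G M s m1 m2 s1 s2 : ℝ} (hG : 0 ≤ G) (hM : 0 ≤ M) (hs : 1 ≤ s)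
    (hsum : m1 + m2 = 2*M) (h1 : s1 ≤ G*m1) (h2 : s2 ≤ G*m2) :
    s1 + s2 ≤ 2*s*G*M := by
  have h3 : G*m1 + G*m2 = 2*(G*M) := by rw [← mul_add, hsum]; ring
  have h4 : 0 ≤ (s-1) * (G*M) := mul_nonneg (by linarith) (mul_nonneg hG hM)
  nlinarith

lemma comb_gb {G M s sg sb mg : ℝ} (hG : 0 ≤ G) (hM : 0 ≤ M) (hs : 1 ≤ s)
    (h1 : sg ≤ G*mg) (h2 : mg ≤ 2*M) (h3 : sb ≤ 2*(s-1)*G*M) :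
    sg + sb ≤ 2*s*G*M := by
  have h4 : G*mg ≤ G*(2*M) := mul_le_mul_of_nonneg_left h2 hG
  nlinarith

lemma comb_single {G M s m1 s1 : ℝ} (hG : 0 ≤ G) (hM : 0 ≤ M) (hs : 1 ≤ s)
    (h1 : s1 ≤ G*m1) (h2 : m1 ≤ 2*M) : s1 ≤ 2*s*G*M := by
  have h4 : G*m1 ≤ G*(2*M) := mul_le_mul_of_nonneg_left h2 hG
  have h5 : 0 ≤ (s-1) * (G*M) := mul_nonneg (by linarith) (mul_nonneg hG hM)
  nlinarith

namespace Pack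

variable (P : Pack L μ h)
include P

lemma mtrunc (a b : ℝ) : mm μ a b = mm μ (max a 0) (min b 1) :=
  mm_trunc P.hprob P.h01 a b

lemma main_brute (k5 N0 : ℕ) (hk5 : L^k5 ≤ (2*L-1)/L) (σ C : ℝ) (hσ : 1 < σ)
    (hC1 : ytot h ≤ C * ((2⁻¹:ℝ)^(k5+1) * (2⁻¹)^(N0+2))^2)
    {n : ℕ} (hn : n ≤ N0) : ∀ a b : ℝ, 0 ≤ a → b ≤ 1 → L^(n+1) < b - a →
    yy h a b ≤ C * (σ/L)^(n+1) * (mm μ a b)^2 := by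
  intro a b ha hb hab
  have hL0 := P.hL0
  have hδ : (0:ℝ) < ((2⁻¹:ℝ)^(k5+1) * (2⁻¹)^(N0+2))^2 := by positivity
  have hC0 : 0 ≤ C := by
    by_contra hc
    push_neg at hc
    nlinarith [P.ytotnn]
  have hθ1 : (1:ℝ) ≤ σ/L := by
    rw [le_div_iff₀ hL0]
    nlinarith [P.hL1]
  have hθn : (1:ℝ) ≤ (σ/L)^(n+1) := one_le_pow₀ hθ1
  have hgap : (2⁻¹:ℝ)^(k5+1) * (2⁻¹)^(n+2) ≤ mm μ a b := by
    apply P.gap k5 hk5 (n+2) a b ha hb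
    calc L^(n+2) ≤ L^(n+1) :=
          pow_le_pow_of_le_one (le_of_lt hL0) (le_of_lt P.hL1) (by omega)
      _ ≤ b - a := le_of_lt hab
  have hmδ : (2⁻¹:ℝ)^(k5+1) * (2⁻¹)^(N0+2) ≤ mm μ a b := by
    refine le_trans ?_ hgap
    apply mul_le_mul_of_nonneg_left ?_ (by positivity)
    exact pow_le_pow_of_le_one (by norm_num) (by norm_num) (by omega)
  calc yy h a b ≤ ytot h := P.yle a b
    _ ≤ C * ((2⁻¹:ℝ)^(k5+1) * (2⁻¹)^(N0+2))^2 := hC1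
    _ ≤ C * (mm μ a b)^2 :=
        mul_le_mul_of_nonneg_left (pow_le_pow_left₀ (by positivity) hmδ 2) hC0
    _ = C * 1 * (mm μ a b)^2 := by ring
    _ ≤ C * (σ/L)^(n+1) * (mm μ a b)^2 := by
        apply mul_le_mul_of_nonneg_right ?_ (by positivity)
        exact mul_le_mul_of_nonneg_left hθn hC0

lemma main (M0 k5 N0 : ℕ) (hM0 : L^(M0+1) ≤ 1 - L) (hk5 : L^k5 ≤ (2*L-1)/L)
    (hN0 : L^(N0+1) ≤ 2*L-1) (σ C : ℝ) (hσ : 1 < σ)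
    (hC1 : ytot h ≤ C * ((2⁻¹:ℝ)^(k5+1) * (2⁻¹)^(N0+2))^2)
    (hC2 : (ytot h * 4^(M0+1)) * ((2:ℝ)^(M0+1))^2 ≤
      C * (((2⁻¹:ℝ)^(k5+1))^2 * (Real.sqrt σ - 1)^2)) :
    ∀ n : ℕ, ∀ a b : ℝ, 0 ≤ a → b ≤ 1 → L^(n+1) < b - a →
      yy h a b ≤ C * (σ/L)^(n+1) * (mm μ a b)^2 := by
  have hL0 := P.hL0
  have hδ : (0:ℝ) < ((2⁻¹:ℝ)^(k5+1) * (2⁻¹)^(N0+2))^2 := by positivity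
  have hC0 : 0 ≤ C := by
    by_contra hc
    push_neg at hc
    nlinarith [P.ytotnn]
  have hθ1 : (1:ℝ) ≤ σ/L := by
    rw [le_div_iff₀ hL0]
    nlinarith [P.hL1]
  have hσ0 : (0:ℝ) ≤ σ := by linarith
  intro n
  induction n with
  | zero => exact P.main_brute k5 N0 hk5 σ C hσ hC1 (Nat.zero_le N0)
  | succ n ih =>
    intro a b ha hb hab
    by_cases hn : n + 1 ≤ N0
    · exact P.main_brute k5 N0 hk5 σ C hσ hC1 hn a b ha hb hab
    push_neg at hn
    by_cases hlen : L^(n+1) < b - a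
    · calc yy h a b ≤ C * (σ/L)^(n+1) * (mm μ a b)^2 := ih a b ha hb hlen
        _ ≤ C * (σ/L)^(n+1+1) * (mm μ a b)^2 := by
            apply mul_le_mul_of_nonneg_right ?_ (by positivity)
            apply mul_le_mul_of_nonneg_left ?_ hC0
            exact pow_le_pow_right₀ hθ1 (by omega)
    push_neg at hlen
    have hab2 : L^(n+2) < b - a := hab
    have hxcl : b ≤ L ∨ 1 - L ≤ a := by
      by_contra hc
      push_neg at hc
      obtain ⟨hbL, haL⟩ := hc
      have h1 : L^(n+1) ≤ L^(N0+1) :=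
        pow_le_pow_of_le_one (le_of_lt hL0) (le_of_lt P.hL1) (by omega)
      nlinarith
    have hpow : L^(n+1) * L = L^(n+2) := by ring
    set m1 := mm μ (a/L) (b/L) with hm1d
    set m2 := mm μ ((a+L-1)/L) ((b+L-1)/L) with hm2d
    have hrec : mm μ a b = 2⁻¹ * m1 + 2⁻¹ * m2 := P.mrec' a b
    have hm1nn : 0 ≤ m1 := P.mnn _ _
    have hm2nn : 0 ≤ m2 := P.mnn _ _
    have hmnn : 0 ≤ mm μ a b := P.mnn _ _
    set G := Real.sqrt (C * (σ/L)^(n+1)) with hGd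
    have hGnn : 0 ≤ G := Real.sqrt_nonneg _
    have hG2 : G^2 = C * (σ/L)^(n+1) := Real.sq_sqrt (by positivity)
    have hs1 : (1:ℝ) < Real.sqrt σ := by
      rw [show (1:ℝ) = Real.sqrt 1 from (Real.sqrt_one).symm]
      exact Real.sqrt_lt_sqrt (by norm_num) hσ
    have hgap : (2⁻¹:ℝ)^(k5+1) * (2⁻¹)^(n+2) ≤ mm μ a b :=
      P.gap k5 hk5 (n+2) a b ha hb (le_of_lt hab2)
    have good : ∀ a' b' : ℝ, 0 ≤ a' → b' ≤ 1 → L^(n+1) < b' - a' →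
        Real.sqrt (yy h a' b') ≤ G * mm μ a' b' := by
      intro a' b' ha' hb' hl'
      apply sqrt_le_of_sq (mul_nonneg hGnn (P.mnn _ _))
      calc yy h a' b' ≤ C*(σ/L)^(n+1)*(mm μ a' b')^2 := ih a' b' ha' hb' hl'
        _ = (G * mm μ a' b')^2 := by rw [mul_pow, hG2]
    have hmm2 : m1 + m2 = 2 * mm μ a b := by linarith
    have hm1le : m1 ≤ 2 * mm μ a b := by linarith
    have hm2le : m2 ≤ 2 * mm μ a b := by linarith
    have key : Real.sqrt (yy h (a/L) (b/L)) + Real.sqrt (yy h ((a+L-1)/L) ((b+L-1)/L))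
        ≤ 2 * Real.sqrt σ * G * mm μ a b := by
      rcases hxcl with hbL | haL
      · -- b ≤ L : child 1 is good
        have hg1 : Real.sqrt (yy h (a/L) (b/L)) ≤ G * m1 := by
          apply good _ _ (by positivity) (by rw [div_le_one hL0]; exact hbL)
          rw [div_sub_div_same, lt_div_iff₀ hL0]
          linarith
        by_cases haL2 : 1 - L ≤ a
        · have hg2 : Real.sqrt (yy h ((a+L-1)/L) ((b+L-1)/L)) ≤ G * m2 := by
            apply good _ _ (by apply div_nonneg ?_ (le_of_lt hL0); linarith)
              (by rw [div_le_one hL0]; linarith)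
            rw [div_sub_div_same, lt_div_iff₀ hL0]
            linarith
          exact comb_gg hGnn hmnn (le_of_lt hs1) hmm2 hg1 hg2
        · push_neg at haL2
          have htr2 : yy h ((a+L-1)/L) ((b+L-1)/L) = yy h 0 ((b+L-1)/L) := by
            rw [P.ytrunc ((a+L-1)/L) ((b+L-1)/L),
              max_eq_right (div_nonpos_of_nonpos_of_nonneg (by linarith) (le_of_lt hL0)),
              min_eq_left (show (b+L-1)/L ≤ (1:ℝ) from by rw [div_le_one hL0]; linarith)]
          have hm2t : m2 = mm μ 0 ((b+L-1)/L) := by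
            rw [hm2d, P.mtrunc ((a+L-1)/L) ((b+L-1)/L),
              max_eq_right (div_nonpos_of_nonpos_of_nonneg (by linarith) (le_of_lt hL0)),
              min_eq_left (show (b+L-1)/L ≤ (1:ℝ) from by rw [div_le_one hL0]; linarith)]
          by_cases hv : L^(n+1) < (b+L-1)/L
          · have hg2 : Real.sqrt (yy h 0 ((b+L-1)/L)) ≤ G * mm μ 0 ((b+L-1)/L) := by
              apply good _ _ le_rfl (by rw [div_le_one hL0]; linarith)
              simpa using hv
            rw [htr2]
            rw [← hm2t] at hg2
            exact comb_gg hGnn hmnn (le_of_lt hs1) hmm2 hg1 hg2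
          · push_neg at hv
            by_cases hv0 : 0 < (b+L-1)/L
            · have hbad := P.badL M0 hM0 n hv0 hv
              have hsb := P.bad_sqrt M0 k5 σ C hσ hC0 hC2 n hgap hbad
              rw [← hGd] at hsb
              rw [htr2]
              exact comb_gb hGnn hmnn (le_of_lt hs1) hg1 hm1le hsb
            · push_neg at hv0
              have hz : yy h 0 ((b+L-1)/L) = 0 := yy_empty hv0
              rw [htr2, hz, Real.sqrt_zero, add_zero]
              exact comb_single hGnn hmnn (le_of_lt hs1) hg1 hm1le
      · -- 1 - L ≤ a : child 2 is good
        have hg2 : Real.sqrt (yy h ((a+L-1)/L) ((b+L-1)/L)) ≤ G * m2 := by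
          apply good _ _ (by apply div_nonneg ?_ (le_of_lt hL0); linarith)
            (by rw [div_le_one hL0]; linarith)
          rw [div_sub_div_same, lt_div_iff₀ hL0]
          linarith
        by_cases hbL2 : b ≤ L
        · have hg1 : Real.sqrt (yy h (a/L) (b/L)) ≤ G * m1 := by
            apply good _ _ (by positivity) (by rw [div_le_one hL0]; exact hbL2)
            rw [div_sub_div_same, lt_div_iff₀ hL0]
            linarith
          exact comb_gg hGnn hmnn (le_of_lt hs1) hmm2 hg1 hg2
        · push_neg at hbL2
          have hb1 : (1:ℝ) ≤ b/L := by rw [le_div_iff₀ hL0]; linarith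
          have htr1 : yy h (a/L) (b/L) = yy h (a/L) 1 := by
            rw [P.ytrunc (a/L) (b/L), max_eq_left (by positivity), min_eq_right hb1]
          have hm1t : m1 = mm μ (a/L) 1 := by
            rw [hm1d, P.mtrunc (a/L) (b/L), max_eq_left (by positivity),
              min_eq_right hb1]
          by_cases hu : L^(n+1) < 1 - a/L
          · have hg1 : Real.sqrt (yy h (a/L) 1) ≤ G * mm μ (a/L) 1 :=
              good _ _ (by positivity) le_rfl hu
            rw [htr1]
            rw [← hm1t] at hg1
            exact comb_gg hGnn hmnn (le_of_lt hs1) hmm2 hg1 hg2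
          · push_neg at hu
            by_cases hu0 : 0 < 1 - a/L
            · have hbad := P.badR M0 hM0 n hu0 hu
              have hsb := P.bad_sqrt M0 k5 σ C hσ hC0 hC2 n hgap hbad
              rw [← hGd] at hsb
              have he : (1:ℝ) - (1 - a/L) = a/L := by ring
              rw [he] at hsb
              rw [htr1, add_comm]
              exact comb_gb hGnn hmnn (le_of_lt hs1) hg2 hm2le hsb
            · push_neg at hu0
              have hz : yy h (a/L) 1 = 0 := yy_empty (by linarith)
              rw [htr1, hz, Real.sqrt_zero, zero_add]
              exact comb_single hGnn hmnn (le_of_lt hs1) hg2 hm2le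
    have hfin := P.ystepP a b
    have hsum_nn : 0 ≤ Real.sqrt (yy h (a/L) (b/L)) +
        Real.sqrt (yy h ((a+L-1)/L) ((b+L-1)/L)) :=
      add_nonneg (Real.sqrt_nonneg _) (Real.sqrt_nonneg _)
    calc yy h a b ≤ 4⁻¹ * L⁻¹ * (Real.sqrt (yy h (a/L) (b/L)) +
          Real.sqrt (yy h ((a+L-1)/L) ((b+L-1)/L)))^2 := hfin
      _ ≤ 4⁻¹ * L⁻¹ * (2 * Real.sqrt σ * G * mm μ a b)^2 := by
          apply mul_le_mul_of_nonneg_left (pow_le_pow_left₀ hsum_nn key 2) (by positivity)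
      _ = 4⁻¹ * L⁻¹ * (4 * (Real.sqrt σ)^2 * G^2 * (mm μ a b)^2) := by ring
      _ = 4⁻¹ * L⁻¹ * (4 * σ * (C * (σ/L)^(n+1)) * (mm μ a b)^2) := by
          rw [Real.sq_sqrt hσ0, hG2]
      _ = C * ((σ/L)^(n+1) * (σ/L)) * (mm μ a b)^2 := by
          field_simp
      _ = C * (σ/L)^(n+1+1) * (mm μ a b)^2 := by rw [← pow_succ]

end Pack

end BCAux

theorem stmt8 (lam : ℝ) (hlam : lam ∈ Set.Ioo (1 / 2 : ℝ) 1)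
    (μ : Measure ℝ) (hμ : IsBernoulliConvolution lam μ)
    (h : ℝ → ℝ) (hmeas : Measurable h) (hnn : ∀ x, 0 ≤ h x)
    (hdens : μ = volume.withDensity (fun x => ENNReal.ofReal (h x)))
    (hL2 : MemLp h 2 volume) :
    ∀ ε : ℝ, 0 < ε → ∃ C : ℝ, ∀ a b : ℝ, 0 ≤ a → a ≤ b → b ≤ 1 →
      (b - a) ^ (1 + ε) * ∫ x in Set.Icc a b, (h x) ^ 2 ≤
        C * (∫ x in Set.Icc a b, h x) ^ 2 := by
  intro ε hε
  obtain ⟨hLhalf, hL1⟩ := hlam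
  have hL0 : (0:ℝ) < lam := by linarith
  have P : BCAux.Pack lam μ h :=
    ⟨hLhalf, hL1, hmeas, hnn, hμ.1, hμ.2.1, hμ.2.2, hdens, hL2⟩
  obtain ⟨M0, hM0'⟩ := exists_pow_lt_of_lt_one (show (0:ℝ) < 1 - lam by linarith) hL1
  have hM0 : lam^(M0+1) ≤ 1 - lam := by
    calc lam^(M0+1) ≤ lam^M0 :=
          pow_le_pow_of_le_one (le_of_lt hL0) (le_of_lt hL1) (by omega)
      _ ≤ 1 - lam := le_of_lt hM0'
  obtain ⟨k5, hk5'⟩ := exists_pow_lt_of_lt_one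
    (show (0:ℝ) < (2*lam-1)/lam by
      apply div_pos (by linarith) hL0) hL1
  have hk5 : lam^k5 ≤ (2*lam-1)/lam := le_of_lt hk5'
  obtain ⟨N0, hN0'⟩ := exists_pow_lt_of_lt_one (show (0:ℝ) < 2*lam-1 by linarith) hL1
  have hN0 : lam^(N0+1) ≤ 2*lam-1 := by
    calc lam^(N0+1) ≤ lam^N0 :=
          pow_le_pow_of_le_one (le_of_lt hL0) (le_of_lt hL1) (by omega)
      _ ≤ 2*lam-1 := le_of_lt hN0'
  set σ : ℝ := min (lam ^ (-ε)) 2 with hσd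
  have hrp1 : (1:ℝ) < lam ^ (-ε) := by
    rw [show (1:ℝ) = lam ^ (0:ℝ) from (Real.rpow_zero lam).symm]
    exact Real.rpow_lt_rpow_of_exponent_gt hL0 hL1 (by linarith)
  have hσ1 : (1:ℝ) < σ := lt_min hrp1 (by norm_num)
  have hσ0 : (0:ℝ) < σ := by linarith
  have hs1 : (1:ℝ) < Real.sqrt σ := by
    rw [show (1:ℝ) = Real.sqrt 1 from (Real.sqrt_one).symm]
    exact Real.sqrt_lt_sqrt (by norm_num) hσ1
  set δ : ℝ := (2⁻¹:ℝ)^(k5+1) * (2⁻¹)^(N0+2) with hδd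
  have hδpos : 0 < δ := by rw [hδd]; positivity
  set e : ℝ := ((2⁻¹:ℝ)^(k5+1))^2 * (Real.sqrt σ - 1)^2 with hed
  have hepos : 0 < e := by
    rw [hed]
    have : 0 < Real.sqrt σ - 1 := by linarith
    positivity
  set C : ℝ := max (BCAux.ytot h * (δ^2)⁻¹)
      ((BCAux.ytot h * 4^(M0+1)) * ((2:ℝ)^(M0+1))^2 * e⁻¹) with hCd
  have hytotnn : 0 ≤ BCAux.ytot h := ENNReal.toReal_nonneg
  have hC0 : 0 ≤ C := le_trans (mul_nonneg hytotnn (by positivity)) (le_max_left _ _)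
  have hC1 : BCAux.ytot h ≤ C * δ^2 := by
    have he1 : BCAux.ytot h = (BCAux.ytot h * (δ^2)⁻¹) * δ^2 := by
      field_simp
    rw [he1]
    apply mul_le_mul_of_nonneg_right (le_max_left _ _) (by positivity)
  have hC2 : (BCAux.ytot h * 4^(M0+1)) * ((2:ℝ)^(M0+1))^2 ≤ C * e := by
    have he2 : (BCAux.ytot h * 4^(M0+1)) * ((2:ℝ)^(M0+1))^2
        = ((BCAux.ytot h * 4^(M0+1)) * ((2:ℝ)^(M0+1))^2 * e⁻¹) * e := by
      field_simp
    rw [he2]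
    apply mul_le_mul_of_nonneg_right (le_max_right _ _) (le_of_lt hepos)
  have hmain := P.main M0 k5 N0 hM0 hk5 hN0 σ C hσ1 hC1 hC2
  refine ⟨C * (σ/lam), ?_⟩
  intro a b ha hab hb
  have hyy : ∫ x in Set.Icc a b, (h x)^2 = BCAux.yy h a b := by
    rw [MeasureTheory.integral_eq_lintegral_of_nonneg_ae
      (Filter.Eventually.of_forall (fun x => by positivity))
      ((hmeas.pow_const 2).aestronglyMeasurable)]
    unfold BCAux.yy BCAux.YE
    congr 1
    apply lintegral_congr
    intro x
    rw [ENNReal.ofReal_pow (hnn x)]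
    rw [← ENNReal.rpow_natCast (ENNReal.ofReal (h x)) 2]
    norm_num
    rfl
  have hmm : ∫ x in Set.Icc a b, h x = BCAux.mm μ a b := by
    rw [MeasureTheory.integral_eq_lintegral_of_nonneg_ae
      (Filter.Eventually.of_forall (fun x => hnn x))
      hmeas.aestronglyMeasurable]
    unfold BCAux.mm
    congr 1
    rw [hdens, withDensity_apply _ measurableSet_Icc]
  rw [hyy, hmm]
  rcases eq_or_lt_of_le hab with heq | hlt
  · rw [← heq, sub_self, Real.zero_rpow (by linarith : (1:ℝ) + ε ≠ 0), zero_mul]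
    have h1 : 0 ≤ σ/lam := by positivity
    have h2 : 0 ≤ BCAux.mm μ a a := BCAux.mm_nonneg a a
    positivity
  · have hl : 0 < b - a := by linarith
    obtain ⟨n, hn1, hn2⟩ := BCAux.scale_exists hL0 hL1 hl (by linarith : b - a ≤ 1)
    have hM := hmain n a b ha hb hn1
    have hXpos : (0:ℝ) < lam ^ (ε:ℝ) := Real.rpow_pos_of_pos hL0 ε
    have hsle : lam ^ (ε:ℝ) ≤ σ⁻¹ := by
      have h1 : σ ≤ lam ^ (-ε) := min_le_left _ _
      rw [Real.rpow_neg (le_of_lt hL0)] at h1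
      have h2 := inv_anti₀ hσ0 h1
      rwa [inv_inv] at h2
    have hscalar : (b-a)^(1+ε) * (σ/lam)^(n+1) ≤ σ/lam := by
      have h1 : (b-a)^(1+ε) ≤ ((lam^n:ℝ))^(1+ε) :=
        Real.rpow_le_rpow (le_of_lt hl) hn2 (by linarith)
      have h2 : ((lam^n:ℝ))^((1:ℝ)+ε) = lam^n * (lam ^ (ε:ℝ))^n := by
        rw [Real.rpow_add (pow_pos hL0 n), Real.rpow_one]
        congr 1
        rw [← Real.rpow_natCast lam n, ← Real.rpow_mul (le_of_lt hL0),
          mul_comm (n:ℝ) ε, Real.rpow_mul (le_of_lt hL0), Real.rpow_natCast]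
      have h3 : (lam ^ (ε:ℝ))^n ≤ (σ⁻¹)^n := pow_le_pow_left₀ (le_of_lt hXpos) hsle n
      have h4 : (b-a)^(1+ε) * (σ/lam)^(n+1) ≤ (lam^n * (σ⁻¹)^n) * (σ/lam)^(n+1) := by
        apply mul_le_mul_of_nonneg_right ?_ (by positivity)
        calc (b-a)^(1+ε) ≤ ((lam^n:ℝ))^(1+ε) := h1
          _ = lam^n * (lam ^ (ε:ℝ))^n := h2
          _ ≤ lam^n * (σ⁻¹)^n := by
              apply mul_le_mul_of_nonneg_left h3 (by positivity)
      have h5 : lam^n * (σ⁻¹)^n * (σ/lam)^(n+1) = σ/lam := by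
        rw [div_pow, pow_succ σ n, pow_succ lam n, inv_pow]
        field_simp
      linarith
    calc (b-a)^(1+ε) * BCAux.yy h a b
        ≤ (b-a)^(1+ε) * (C*(σ/lam)^(n+1)*(BCAux.mm μ a b)^2) := by
          exact mul_le_mul_of_nonneg_left hM (Real.rpow_nonneg (by linarith) _)
      _ = ((b-a)^(1+ε) * (σ/lam)^(n+1)) * C * (BCAux.mm μ a b)^2 := by ring
      _ ≤ (σ/lam) * C * (BCAux.mm μ a b)^2 := by
          apply mul_le_mul_of_nonneg_right ?_ (sq_nonneg _)
          exact mul_le_mul_of_nonneg_right hscalar hC0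
      _ = C * (σ/lam) * (BCAux.mm μ a b)^2 := by ring
end

section
/- Let λ ∈ (1/2, 1) and set θ = −log 2 / log λ. Then there is a constant K > 0 such that for every r with 0 < r ≤ 1 − λ, (K/2) · (1 − λ)^{−θ} · r^θ ≤ μ_λ([0, r)) ≤ 2K · (1 − λ)^{−θ} · r^θ. -/
open MeasureTheory Filter Set
open scoped ENNReal

theorem stmt9 (lam : ℝ) (hlam : lam ∈ Set.Ioo (1 / 2 : ℝ) 1)
    (μ : Measure ℝ) (hμ : IsBernoulliConvolution lam μ)
    (θ : ℝ) (hθ : θ = -Real.log 2 / Real.log lam) :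
    ∃ K : ℝ, 0 < K ∧ ∀ r : ℝ, 0 < r → r ≤ 1 - lam →
      ENNReal.ofReal (K / 2 * (1 - lam) ^ (-θ) * r ^ θ) ≤ μ (Set.Ico 0 r) ∧
        μ (Set.Ico 0 r) ≤ ENNReal.ofReal (2 * K * (1 - lam) ^ (-θ) * r ^ θ) := by
  obtain ⟨hprob, hIcc, heq⟩ := hμ
  obtain ⟨hl, hl1⟩ := hlam
  have hl0 : (0:ℝ) < lam := by linarith
  have h1l : (0:ℝ) < 1 - lam := by linarith
  -- μ vanishes on negatives
  have hIio : μ (Set.Iio (0:ℝ)) = 0 := by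
    have hc : μ (Set.Icc (0:ℝ) 1)ᶜ = 0 := by
      have := measure_compl (measurableSet_Icc (a := (0:ℝ)) (b := 1)) (measure_ne_top μ _)
      rw [hIcc, measure_univ] at this
      simpa using this
    refine measure_mono_null ?_ hc
    intro x hx
    simp only [Set.mem_Iio] at hx
    simp only [Set.mem_compl_iff, Set.mem_Icc, not_and]
    intro h; linarith
  have hmeas1 : Measurable fun x : ℝ => lam * x := measurable_id.const_mul lam
  have hmeas2 : Measurable fun x : ℝ => lam * x + 1 - lam := by fun_prop
  have expand : ∀ r : ℝ, μ (Set.Ico 0 r)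
      = 1/2 * μ ((fun x => lam * x) ⁻¹' Set.Ico 0 r)
      + 1/2 * μ ((fun x => lam * x + 1 - lam) ⁻¹' Set.Ico 0 r) := by
    intro r
    conv_lhs => rw [heq]
    rw [Measure.add_apply, Measure.smul_apply, Measure.smul_apply,
        Measure.map_apply hmeas1 measurableSet_Ico,
        Measure.map_apply hmeas2 measurableSet_Ico]
    simp [smul_eq_mul]
  have pre1 : ∀ r : ℝ, (fun x => lam * x) ⁻¹' Set.Ico 0 r = Set.Ico 0 (r / lam) := by
    intro r; ext x
    simp only [Set.mem_preimage, Set.mem_Ico]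
    constructor
    · rintro ⟨h1, h2⟩
      refine ⟨by nlinarith, (lt_div_iff₀ hl0).mpr (by linarith [mul_comm lam x])⟩
    · rintro ⟨h1, h2⟩
      refine ⟨mul_nonneg hl0.le h1, ?_⟩
      have := (lt_div_iff₀ hl0).mp h2
      linarith [mul_comm x lam]
  -- key self-similarity identity
  have lemA : ∀ r : ℝ, r ≤ 1 - lam →
      μ (Set.Ico 0 r) = 1/2 * μ (Set.Ico 0 (r / lam)) := by
    intro r hr
    have h2 : μ ((fun x => lam * x + 1 - lam) ⁻¹' Set.Ico 0 r) = 0 := by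
      refine measure_mono_null ?_ hIio
      intro x hx
      simp only [Set.mem_preimage, Set.mem_Ico] at hx
      simp only [Set.mem_Iio]
      by_contra h
      push_neg at h
      nlinarith [mul_nonneg hl0.le h, hx.2]
    rw [expand r, pre1 r, h2, mul_zero, add_zero]
  -- lower bound always
  have lemB : ∀ r : ℝ, 1/2 * μ (Set.Ico 0 (r / lam)) ≤ μ (Set.Ico 0 r) := by
    intro r
    rw [expand r, pre1 r]
    exact le_self_add
  -- iterated versions
  have iterA : ∀ n : ℕ, ∀ r : ℝ, r ≤ lam ^ n * (1 - lam) →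
      μ (Set.Ico 0 r) = (1/2 : ℝ≥0∞) ^ n * μ (Set.Ico 0 (r / lam ^ n)) := by
    intro n
    induction n with
    | zero => intro r _; simp
    | succ n ih =>
      intro r hr
      have hpl : lam ^ (n+1) ≤ 1 := pow_le_one₀ hl0.le hl1.le
      have hr' : r ≤ 1 - lam :=
        le_trans hr (mul_le_of_le_one_left h1l.le hpl)
      have hr2 : r / lam ≤ lam ^ n * (1 - lam) := by
        rw [div_le_iff₀ hl0]
        rw [pow_succ] at hr
        nlinarith
      rw [lemA r hr', ih (r / lam) hr2]
      have : r / lam / lam ^ n = r / lam ^ (n+1) := by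
        rw [div_div, ← pow_succ']
      rw [this, pow_succ]
      ring
  have iterB : ∀ n : ℕ, ∀ r : ℝ,
      (1/2 : ℝ≥0∞) ^ n * μ (Set.Ico 0 (r / lam ^ n)) ≤ μ (Set.Ico 0 r) := by
    intro n
    induction n with
    | zero => intro r; simp
    | succ n ih =>
      intro r
      calc (1/2 : ℝ≥0∞) ^ (n+1) * μ (Set.Ico 0 (r / lam ^ (n+1)))
          = 1/2 * ((1/2 : ℝ≥0∞) ^ n * μ (Set.Ico 0 (r / lam / lam ^ n))) := by
            rw [div_div, ← pow_succ', pow_succ]; ring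
        _ ≤ 1/2 * μ (Set.Ico 0 (r / lam)) := by
            exact mul_le_mul_right (ih (r / lam)) _
        _ ≤ μ (Set.Ico 0 r) := lemB r
  -- positivity
  have hpos : ∀ s : ℝ, 0 < s → 0 < μ (Set.Ico 0 s) := by
    intro s hs
    obtain ⟨n, hn⟩ := exists_pow_lt_of_lt_one hs hl1
    have h1 : (1:ℝ) < s / lam ^ n := (one_lt_div (pow_pos hl0 n)).mpr hn
    have hsub : Set.Icc (0:ℝ) 1 ⊆ Set.Ico 0 (s / lam ^ n) := by
      intro x hx
      simp only [Set.mem_Icc] at hx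
      exact ⟨hx.1, lt_of_le_of_lt hx.2 h1⟩
    have h2 : (1:ℝ≥0∞) ≤ μ (Set.Ico 0 (s / lam ^ n)) := by
      rw [← hIcc]; exact measure_mono hsub
    have := iterB n s
    have h3 : (1/2 : ℝ≥0∞) ^ n * 1 ≤ μ (Set.Ico 0 s) :=
      le_trans (mul_le_mul_right h2 _) this
    refine lt_of_lt_of_le ?_ h3
    simp [ENNReal.pow_pos]
  -- the constant
  set K : ℝ := (μ (Set.Ico 0 (1 - lam))).toReal with hKdef
  have hKfin : μ (Set.Ico 0 (1 - lam)) ≠ ⊤ := measure_ne_top μ _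
  have hKof : ENNReal.ofReal K = μ (Set.Ico 0 (1 - lam)) := ENNReal.ofReal_toReal hKfin
  have hK0 : 0 < K := ENNReal.toReal_pos (hpos _ h1l).ne' hKfin
  -- θ facts
  have hlog : Real.log lam < 0 := Real.log_neg hl0 hl1
  have hθpos : 0 < θ := by
    rw [hθ]
    exact div_pos_of_neg_of_neg (by simpa using neg_neg_iff_pos.mpr (Real.log_pos one_lt_two)) hlog
  have hlamtheta : lam ^ θ = 1/2 := by
    rw [Real.rpow_def_of_pos hl0, hθ, mul_comm, div_mul_cancel₀ _ hlog.ne, Real.exp_neg,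
      Real.exp_log two_pos]
    norm_num
  have hpowθ : ∀ n : ℕ, (lam ^ n : ℝ) ^ θ = (1/2 : ℝ) ^ n := by
    intro n
    induction n with
    | zero => simp
    | succ n ih =>
      rw [pow_succ, Real.mul_rpow (pow_nonneg hl0.le n) hl0.le, ih, hlamtheta, pow_succ]
  have h12 : ENNReal.ofReal (1/2 : ℝ) = (1/2 : ℝ≥0∞) := by
    rw [ENNReal.ofReal_div_of_pos two_pos]
    simp
  refine ⟨K, hK0, fun r hr0 hr1 => ?_⟩
  -- choose the scale n
  have hex : ∃ m : ℕ, lam ^ (m+1) < r / (1 - lam) := by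
    have ht0 : 0 < r / (1 - lam) := div_pos hr0 h1l
    obtain ⟨m, hm⟩ := exists_pow_lt_of_lt_one ht0 hl1
    exact ⟨m, lt_of_le_of_lt (pow_le_pow_of_le_one hl0.le hl1.le (Nat.le_succ m)) hm⟩
  set n := Nat.find hex with hn
  have hn1 : lam ^ (n+1) < r / (1 - lam) := Nat.find_spec hex
  have hn2 : r / (1 - lam) ≤ lam ^ n := by
    rcases Nat.eq_zero_or_pos n with h0 | h0
    · rw [h0, pow_zero]
      exact (div_le_one h1l).mpr hr1
    · have hmin := Nat.find_min hex (m := n - 1) (by omega)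
      push_neg at hmin
      have heqn : n - 1 + 1 = n := by omega
      rwa [heqn] at hmin
  have ht0 : 0 < r / (1 - lam) := div_pos hr0 h1l
  -- bounds on r
  have hrub : r ≤ lam ^ n * (1 - lam) := by
    have := (div_le_iff₀ h1l).mp hn2
    linarith
  have hrlb : lam ^ (n+1) * (1 - lam) < r := by
    have := (lt_div_iff₀ h1l).mp hn1
    linarith
  set u := r / lam ^ n with hu
  have hpn : (0:ℝ) < lam ^ n := pow_pos hl0 n
  have hmain : μ (Set.Ico 0 r) = (1/2 : ℝ≥0∞) ^ n * μ (Set.Ico 0 u) := iterA n r hrub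
  -- bounds on u
  have hu_ub : u ≤ 1 - lam := by
    rw [hu, div_le_iff₀ hpn]
    nlinarith
  have hu_lb : lam * (1 - lam) < u := by
    rw [hu, lt_div_iff₀ hpn]
    rw [pow_succ] at hrlb
    nlinarith
  -- μ(Ico 0 u) between (1/2)·ofReal K and ofReal K
  have hupper : μ (Set.Ico 0 u) ≤ ENNReal.ofReal K := by
    rw [hKof]
    exact measure_mono (Set.Ico_subset_Ico le_rfl hu_ub)
  have hlower : (1/2 : ℝ≥0∞) * ENNReal.ofReal K ≤ μ (Set.Ico 0 u) := by
    have hA := lemA (lam * (1 - lam)) (by nlinarith)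
    have harg : lam * (1 - lam) / lam = 1 - lam := by
      rw [mul_comm, mul_div_assoc, div_self hl0.ne', mul_one]
    rw [harg] at hA
    rw [hKof, ← hA]
    exact measure_mono (Set.Ico_subset_Ico le_rfl hu_lb.le)
  -- real-number estimates on t^θ
  have hAeq : (1 - lam) ^ (-θ) * r ^ θ = (r / (1 - lam)) ^ θ := by
    rw [Real.div_rpow hr0.le h1l.le, Real.rpow_neg h1l.le]
    ring
  have htub : (r / (1 - lam)) ^ θ ≤ (1/2 : ℝ) ^ n := by
    rw [← hpowθ n]
    exact Real.rpow_le_rpow ht0.le hn2 hθpos.le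
  have htlb : (1/2 : ℝ) ^ (n+1) ≤ (r / (1 - lam)) ^ θ := by
    rw [← hpowθ (n+1)]
    exact Real.rpow_le_rpow (pow_nonneg hl0.le _) hn1.le hθpos.le
  have hhalfpow : ∀ m : ℕ, ENNReal.ofReal ((1/2 : ℝ) ^ m) = (1/2 : ℝ≥0∞) ^ m := by
    intro m
    rw [ENNReal.ofReal_pow (by norm_num), h12]
  constructor
  · calc ENNReal.ofReal (K / 2 * (1 - lam) ^ (-θ) * r ^ θ)
        ≤ ENNReal.ofReal (K * (1/2 : ℝ) ^ (n+1)) := by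
          apply ENNReal.ofReal_le_ofReal
          rw [mul_assoc, hAeq]
          calc K / 2 * (r / (1 - lam)) ^ θ ≤ K / 2 * (1/2 : ℝ) ^ n := by
                apply mul_le_mul_of_nonneg_left htub (by linarith)
            _ = K * (1/2 : ℝ) ^ (n+1) := by ring
      _ = ENNReal.ofReal K * (1/2 : ℝ≥0∞) ^ (n+1) := by
          rw [ENNReal.ofReal_mul hK0.le, hhalfpow]
      _ = (1/2 : ℝ≥0∞) ^ n * ((1/2 : ℝ≥0∞) * ENNReal.ofReal K) := by
          rw [pow_succ]; ring
      _ ≤ (1/2 : ℝ≥0∞) ^ n * μ (Set.Ico 0 u) := mul_le_mul_right hlower _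
      _ = μ (Set.Ico 0 r) := hmain.symm
  · calc μ (Set.Ico 0 r) = (1/2 : ℝ≥0∞) ^ n * μ (Set.Ico 0 u) := hmain
      _ ≤ (1/2 : ℝ≥0∞) ^ n * ENNReal.ofReal K := mul_le_mul_right hupper _
      _ = ENNReal.ofReal ((1/2 : ℝ) ^ n * K) := by
          rw [ENNReal.ofReal_mul (by positivity), hhalfpow]
      _ ≤ ENNReal.ofReal (2 * K * (1 - lam) ^ (-θ) * r ^ θ) := by
          apply ENNReal.ofReal_le_ofReal
          rw [mul_assoc, hAeq]
          calc (1/2 : ℝ) ^ n * K = 2 * K * (1/2 : ℝ) ^ (n+1) := by ring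
            _ ≤ 2 * K * (r / (1 - lam)) ^ θ := by
                apply mul_le_mul_of_nonneg_left htlb (by linarith)
end

section
/- Let λ ∈ (1/2, 1) and set θ = −log 2 / log λ. Then there is a constant c > 0 such that μ_λ(I) ≥ c · |I|^θ holds for every interval I ⊆ [0,1], where |I| denotes the length of I. -/
open MeasureTheory Filter Set
open scoped ENNReal

set_option maxHeartbeats 1000000 in
theorem stmt10 (lam : ℝ) (hlam : lam ∈ Set.Ioo (1 / 2 : ℝ) 1)
    (μ : Measure ℝ) (hμ : IsBernoulliConvolution lam μ)
    (θ : ℝ) (hθ : θ = -Real.log 2 / Real.log lam) :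
    ∃ c : ℝ, 0 < c ∧ ∀ a b : ℝ, 0 ≤ a → a ≤ b → b ≤ 1 →
      ENNReal.ofReal (c * (b - a) ^ θ) ≤ μ (Set.Icc a b) := by
  classical
  obtain ⟨hprob, h01, heq⟩ := hμ
  obtain ⟨hl2, hl1⟩ := hlam
  have hl0 : (0:ℝ) < lam := by linarith
  have hlog : Real.log lam < 0 := Real.log_neg hl0 hl1
  have h2log : 0 < Real.log 2 := Real.log_pos one_lt_two
  have hθpos : 0 < θ := by
    rw [hθ, div_pos_iff]
    right; constructor <;> linarith
  have hlamθ : lam ^ θ = 1/2 := by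
    rw [Real.rpow_def_of_pos hl0, hθ]
    have : Real.log lam * (-Real.log 2 / Real.log lam) = -Real.log 2 := by
      rw [mul_comm, div_mul_cancel₀ _ hlog.ne]
    rw [this, Real.exp_neg, Real.exp_log two_pos]
    norm_num
  have hm1 : Measurable fun x : ℝ => lam * x := by fun_prop
  have hm2 : Measurable fun x : ℝ => lam * x + 1 - lam := by fun_prop
  have key1 : ∀ B : Set ℝ, MeasurableSet B →
      (1/2 : ℝ≥0∞) * μ ((fun x => lam * x) ⁻¹' B) ≤ μ B := by
    intro B hB
    nth_rewrite 2 [heq]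
    rw [Measure.add_apply, Measure.smul_apply, Measure.smul_apply,
      Measure.map_apply hm1 hB, smul_eq_mul]
    exact le_self_add
  have key2 : ∀ B : Set ℝ, MeasurableSet B →
      (1/2 : ℝ≥0∞) * μ ((fun x => lam * x + 1 - lam) ⁻¹' B) ≤ μ B := by
    intro B hB
    nth_rewrite 2 [heq]
    rw [Measure.add_apply, Measure.smul_apply, Measure.smul_apply,
      Measure.map_apply hm2 hB, smul_eq_mul]
    exact le_add_self
  -- every point of [0,1] lies in a level-n cylinder of measure ≥ 2⁻ⁿ
  have cyl : ∀ n : ℕ, ∀ t : ℝ, 0 ≤ t → t ≤ 1 →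
      ∃ x : ℝ, 0 ≤ x ∧ x + lam ^ n ≤ 1 ∧ x ≤ t ∧ t ≤ x + lam ^ n ∧
        (1/2 : ℝ≥0∞) ^ n ≤ μ (Set.Icc x (x + lam ^ n)) := by
    intro n
    induction n with
    | zero =>
      intro t ht0 ht1
      exact ⟨0, le_refl 0, by norm_num, ht0, by simpa using ht1, by simp [h01]⟩
    | succ n ih =>
      intro t ht0 ht1
      have hps : lam ^ (n+1) = lam * lam ^ n := by ring
      by_cases hcase : t ≤ lam
      · obtain ⟨x, hx0, hx1, hxt, htx, hxμ⟩ := ih (t / lam) (div_nonneg ht0 hl0.le)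
          (by rw [div_le_one hl0]; exact hcase)
        have hts : lam * (t / lam) = t := by field_simp
        have hpow : (0:ℝ) < lam ^ n := pow_pos hl0 n
        refine ⟨lam * x, by positivity, ?_, ?_, ?_, ?_⟩
        · have := mul_le_mul_of_nonneg_left hx1 hl0.le
          nlinarith
        · nlinarith [mul_le_mul_of_nonneg_left hxt hl0.le]
        · nlinarith [mul_le_mul_of_nonneg_left htx hl0.le]
        · have hsub : Set.Icc x (x + lam ^ n) ⊆
              (fun y => lam * y) ⁻¹' Set.Icc (lam * x) (lam * x + lam ^ (n+1)) := by
            intro y hy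
            simp only [Set.mem_preimage, Set.mem_Icc] at *
            constructor
            · nlinarith [hy.1]
            · nlinarith [mul_le_mul_of_nonneg_left hy.2 hl0.le]
          calc (1/2:ℝ≥0∞) ^ (n+1) = (1/2) * (1/2) ^ n := by ring
            _ ≤ (1/2) * μ (Set.Icc x (x + lam ^ n)) := mul_le_mul_right hxμ _
            _ ≤ (1/2) * μ ((fun y => lam * y) ⁻¹' Set.Icc (lam * x) (lam * x + lam ^ (n+1))) :=
                mul_le_mul_right (measure_mono hsub) _
            _ ≤ μ (Set.Icc (lam * x) (lam * x + lam ^ (n+1))) := key1 _ measurableSet_Icc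
      · push_neg at hcase
        have hs : lam * ((t - (1 - lam)) / lam) = t - (1 - lam) := by field_simp
        obtain ⟨x, hx0, hx1, hxt, htx, hxμ⟩ := ih ((t - (1 - lam)) / lam)
          (div_nonneg (by linarith) hl0.le)
          (by rw [div_le_one hl0]; linarith)
        have hpow : (0:ℝ) < lam ^ n := pow_pos hl0 n
        have hxpos : 0 ≤ lam * x := mul_nonneg hl0.le hx0
        refine ⟨lam * x + 1 - lam, by linarith, ?_, ?_, ?_, ?_⟩
        · have := mul_le_mul_of_nonneg_left hx1 hl0.le
          nlinarith
        · nlinarith [mul_le_mul_of_nonneg_left hxt hl0.le]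
        · nlinarith [mul_le_mul_of_nonneg_left htx hl0.le]
        · have hsub : Set.Icc x (x + lam ^ n) ⊆
              (fun y => lam * y + 1 - lam) ⁻¹'
                Set.Icc (lam * x + 1 - lam) (lam * x + 1 - lam + lam ^ (n+1)) := by
            intro y hy
            simp only [Set.mem_preimage, Set.mem_Icc] at *
            constructor
            · nlinarith [hy.1]
            · nlinarith [mul_le_mul_of_nonneg_left hy.2 hl0.le]
          calc (1/2:ℝ≥0∞) ^ (n+1) = (1/2) * (1/2) ^ n := by ring
            _ ≤ (1/2) * μ (Set.Icc x (x + lam ^ n)) := mul_le_mul_right hxμ _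
            _ ≤ (1/2) * μ ((fun y => lam * y + 1 - lam) ⁻¹'
                Set.Icc (lam * x + 1 - lam) (lam * x + 1 - lam + lam ^ (n+1))) :=
                mul_le_mul_right (measure_mono hsub) _
            _ ≤ μ (Set.Icc (lam * x + 1 - lam) (lam * x + 1 - lam + lam ^ (n+1))) :=
                key2 _ measurableSet_Icc
  refine ⟨(lam/2) ^ θ, Real.rpow_pos_of_pos (by linarith) θ, ?_⟩
  intro a b ha hab hb1
  rcases eq_or_lt_of_le hab with rfl | hlt
  · simp [Real.zero_rpow hθpos.ne']
  · have hℓ : 0 < b - a := by linarith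
    have hℓ1 : b - a ≤ 1 := by linarith
    have hex : ∃ n : ℕ, lam ^ n < (b - a) / 2 :=
      exists_pow_lt_of_lt_one (by linarith) hl1
    set N := Nat.find hex with hN_def
    have hN : lam ^ N < (b - a) / 2 := Nat.find_spec hex
    have hN0 : N ≠ 0 := by
      intro h
      rw [h] at hN
      simp at hN
      linarith
    obtain ⟨k, hk⟩ : ∃ k, N = k + 1 := Nat.exists_eq_succ_of_ne_zero hN0
    have hkmin : ¬ lam ^ k < (b - a) / 2 := Nat.find_min hex (by omega)
    push_neg at hkmin
    have hNlow : lam * (b - a) / 2 ≤ lam ^ N := by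
      rw [hk, pow_succ']
      nlinarith
    have hNpow : (0:ℝ) < lam ^ N := pow_pos hl0 N
    obtain ⟨x, hx0, hx1, hxt, htx, hxμ⟩ := cyl N (a + lam ^ N)
      (by positivity) (by linarith)
    have hsub : Set.Icc x (x + lam ^ N) ⊆ Set.Icc a b := by
      apply Set.Icc_subset_Icc <;> linarith
    have hreal : (lam/2) ^ θ * (b - a) ^ θ ≤ (1/2 : ℝ) ^ N := by
      have h1 : (lam/2) ^ θ * (b - a) ^ θ = (lam/2 * (b - a)) ^ θ :=
        (Real.mul_rpow (by positivity) (by positivity)).symm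
      have h2 : (lam/2 * (b - a)) ^ θ ≤ (lam ^ N) ^ θ := by
        apply Real.rpow_le_rpow (by positivity) _ hθpos.le
        nlinarith
      have h3 : ((lam ^ N : ℝ)) ^ θ = (lam ^ θ) ^ N := by
        rw [← Real.rpow_natCast lam N, ← Real.rpow_mul hl0.le, mul_comm,
          Real.rpow_mul hl0.le, Real.rpow_natCast]
      rw [h1]
      calc (lam/2 * (b - a)) ^ θ ≤ (lam ^ N) ^ θ := h2
        _ = (1/2 : ℝ) ^ N := by rw [h3, hlamθ]
    calc ENNReal.ofReal ((lam/2) ^ θ * (b - a) ^ θ) ≤ ENNReal.ofReal ((1/2 : ℝ) ^ N) :=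
          ENNReal.ofReal_le_ofReal hreal
      _ = (1/2 : ℝ≥0∞) ^ N := by
          rw [ENNReal.ofReal_pow (by norm_num)]
          congr 1
          rw [one_div, ENNReal.ofReal_inv_of_pos two_pos, ENNReal.ofReal_ofNat, one_div]
      _ ≤ μ (Set.Icc x (x + lam ^ N)) := hxμ
      _ ≤ μ (Set.Icc a b) := measure_mono hsub
end

section
/- Let λ ∈ (1/2, 1) and suppose that the Bernoulli convolution measure μ_λ is absolutely continuous with density h ∈ L²([0,1]). Then for every r > 0 with λr < 1 − λ, one has ∫_0^{λr} h(x) dx = (1/2) ∫_0^r h(x) dx and ∫_0^{λr} h(x)² dx = (1/(4λ)) ∫_0^r h(x)² dx; consequently λr · (∫_0^{λr} h²) / (∫_0^{λr} h)² = r · (∫_0^r h²) / (∫_0^r h)². -/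
open MeasureTheory Filter Set
open scoped ENNReal

theorem stmt11 (lam : ℝ) (hlam : lam ∈ Set.Ioo (1 / 2 : ℝ) 1)
    (μ : Measure ℝ) (hμ : IsBernoulliConvolution lam μ)
    (h : ℝ → ℝ) (hmeas : Measurable h) (hnn : ∀ x, 0 ≤ h x)
    (hdens : μ = volume.withDensity (fun x => ENNReal.ofReal (h x)))
    (hL2 : MemLp h 2 volume)
    (r : ℝ) (hr : 0 < r) (hr' : lam * r < 1 - lam) :
    (∫ x in (0:ℝ)..(lam * r), h x) = (1 / 2) * ∫ x in (0:ℝ)..r, h x ∧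
      (∫ x in (0:ℝ)..(lam * r), (h x) ^ 2) = (1 / (4 * lam)) * ∫ x in (0:ℝ)..r, (h x) ^ 2 ∧
      lam * r * (∫ x in (0:ℝ)..(lam * r), (h x) ^ 2) / (∫ x in (0:ℝ)..(lam * r), h x) ^ 2 =
        r * (∫ x in (0:ℝ)..r, (h x) ^ 2) / (∫ x in (0:ℝ)..r, h x) ^ 2 := by
  obtain ⟨hlam1, hlam2⟩ := hlam
  have hlam0 : (0:ℝ) < lam := lt_trans (by norm_num) hlam1
  obtain ⟨hprob, hIcc, heq⟩ := hμ
  haveI := hprob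
  -- measure vanishes outside [0,1]
  have hcompl : μ (Set.Icc (0:ℝ) 1)ᶜ = 0 := by
    rw [measure_compl measurableSet_Icc (measure_ne_top μ _), hIcc]
    simp
  have hneg : ∀ s : Set ℝ, s ⊆ Set.Iio 0 → μ s = 0 := by
    intro s hs
    refine measure_mono_null (hs.trans ?_) hcompl
    intro x hx
    simp only [Set.mem_Iio] at hx
    simp only [Set.mem_compl_iff, Set.mem_Icc, not_and]
    intro h0; linarith
  -- self-similarity on subsets of (-∞, 1-λ)
  have h1m : Measurable fun x : ℝ => lam * x := measurable_const_mul lam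
  have h2m : Measurable fun x : ℝ => lam * x + 1 - lam := by fun_prop
  have key : ∀ A : Set ℝ, MeasurableSet A → A ⊆ Set.Iio (1 - lam) →
      μ A = (1/2 : ℝ≥0∞) * μ ((fun x => lam * x) ⁻¹' A) := by
    intro A hA hsub
    have hz : μ ((fun x => lam * x + 1 - lam) ⁻¹' A) = 0 := by
      apply hneg
      intro x hx
      have hx' := hsub hx
      simp only [Set.mem_preimage, Set.mem_Iio] at hx' ⊢
      nlinarith
    conv_lhs => rw [heq]
    rw [Measure.add_apply, Measure.smul_apply, Measure.smul_apply,
      Measure.map_apply h1m hA, Measure.map_apply h2m hA, hz]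
    simp
  -- the a.e. functional equation on (-∞, 1-λ)
  set g : ℝ → ℝ := fun x => (2 * lam)⁻¹ * h (x / lam) with hg
  have hgmeas : Measurable g := by fun_prop
  have hgnn : ∀ x, 0 ≤ g x := fun x => by
    have := hnn (x / lam); positivity
  have hae : h =ᵐ[volume.restrict (Set.Iio (1 - lam))] g := by
    have hae' : (fun x => ENNReal.ofReal (h x))
        =ᵐ[volume.restrict (Set.Iio (1 - lam))] fun x => ENNReal.ofReal (g x) := by
      refine ae_eq_of_forall_setLIntegral_eq_of_sigmaFinite
        (by fun_prop) (by fun_prop) ?_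
      intro s hs hfin
      rw [Measure.restrict_restrict hs]
      set B := s ∩ Set.Iio (1 - lam) with hB
      have hBm : MeasurableSet B := hs.inter measurableSet_Iio
      have hBsub : B ⊆ Set.Iio (1 - lam) := Set.inter_subset_right
      have hμB : μ B = ∫⁻ x in B, ENNReal.ofReal (h x) ∂volume := by
        rw [hdens, withDensity_apply _ hBm]
      have hμpre : μ ((fun x => lam * x) ⁻¹' B)
          = ∫⁻ x in (fun x => lam * x) ⁻¹' B, ENNReal.ofReal (h x) ∂volume := by
        rw [hdens, withDensity_apply _ (h1m hBm)]
      have hcv : ∫⁻ x in (fun x => lam * x) ⁻¹' B, ENNReal.ofReal (h x) ∂volume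
          = ENNReal.ofReal lam⁻¹ * ∫⁻ y in B, ENNReal.ofReal (h (y / lam)) ∂volume := by
        have := setLIntegral_map (μ := (volume : Measure ℝ)) hBm
          (f := fun y => ENNReal.ofReal (h (y / lam))) (g := fun x => lam * x)
          (by fun_prop) h1m
        rw [Real.map_volume_mul_left hlam0.ne'] at this
        rw [Measure.restrict_smul, lintegral_smul_measure] at this
        rw [abs_of_pos (inv_pos.mpr hlam0)] at this
        calc ∫⁻ x in (fun x => lam * x) ⁻¹' B, ENNReal.ofReal (h x) ∂volume
            = ∫⁻ x in (fun x => lam * x) ⁻¹' B, ENNReal.ofReal (h (lam * x / lam)) ∂volume := by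
              congr 1; ext x; rw [mul_div_cancel_left₀ _ hlam0.ne']
          _ = ENNReal.ofReal lam⁻¹ * ∫⁻ y in B, ENNReal.ofReal (h (y / lam)) ∂volume := by
              rw [← this, smul_eq_mul]
      calc ∫⁻ x in B, ENNReal.ofReal (h x) ∂volume = μ B := hμB.symm
        _ = (1/2 : ℝ≥0∞) * μ ((fun x => lam * x) ⁻¹' B) := key B hBm hBsub
        _ = (1/2 : ℝ≥0∞) * (ENNReal.ofReal lam⁻¹
              * ∫⁻ y in B, ENNReal.ofReal (h (y / lam)) ∂volume) := by rw [hμpre, hcv]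
        _ = ENNReal.ofReal ((2 * lam)⁻¹) * ∫⁻ y in B, ENNReal.ofReal (h (y / lam)) ∂volume := by
              rw [← mul_assoc]
              congr 1
              rw [mul_inv, ENNReal.ofReal_mul (by norm_num : (0:ℝ) ≤ 2⁻¹),
                ENNReal.ofReal_inv_of_pos (by norm_num : (0:ℝ) < 2),
                ENNReal.ofReal_ofNat, one_div]
        _ = ∫⁻ y in B, ENNReal.ofReal (g y) ∂volume := by
              rw [← lintegral_const_mul _ (by fun_prop)]
              congr 1; ext y
              rw [hg, ENNReal.ofReal_mul (by positivity)]
    filter_upwards [hae'] with x hx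
    have := ENNReal.ofReal_eq_ofReal_iff (hnn x) (hgnn x)
    exact this.mp hx
  -- restrict the a.e. equation to the interval of integration
  have hsub : Set.Ioc (0:ℝ) (lam * r) ⊆ Set.Iio (1 - lam) := fun x hx =>
    Set.mem_Iio.mpr (lt_of_le_of_lt hx.2 hr')
  have haeI : h =ᵐ[volume.restrict (Set.Ioc (0:ℝ) (lam * r))] g :=
    ae_restrict_of_ae_restrict_of_subset hsub hae
  have hlr : (0:ℝ) ≤ lam * r := by positivity
  -- first identity
  have e1 : (∫ x in (0:ℝ)..(lam * r), h x) = (1 / 2) * ∫ x in (0:ℝ)..r, h x := by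
    rw [intervalIntegral.integral_of_le hlr, integral_congr_ae haeI,
      ← intervalIntegral.integral_of_le hlr]
    have : (∫ x in (0:ℝ)..(lam * r), g x)
        = (2 * lam)⁻¹ * ∫ x in (0:ℝ)..(lam * r), h (x / lam) := by
      simp [hg, intervalIntegral.integral_const_mul]
    rw [this, intervalIntegral.integral_comp_div _ hlam0.ne', zero_div,
      mul_div_cancel_left₀ _ hlam0.ne', smul_eq_mul]
    field_simp
  -- second identity
  have haeI2 : (fun x => (h x) ^ 2) =ᵐ[volume.restrict (Set.Ioc (0:ℝ) (lam * r))]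
      (fun x => (2 * lam)⁻¹ ^ 2 * (h (x / lam)) ^ 2) := by
    filter_upwards [haeI] with x hx
    rw [hx, hg]; ring
  have e2 : (∫ x in (0:ℝ)..(lam * r), (h x) ^ 2)
      = (1 / (4 * lam)) * ∫ x in (0:ℝ)..r, (h x) ^ 2 := by
    rw [intervalIntegral.integral_of_le hlr, integral_congr_ae haeI2,
      ← intervalIntegral.integral_of_le hlr]
    rw [intervalIntegral.integral_const_mul,
      intervalIntegral.integral_comp_div (fun x => (h x)^2) hlam0.ne', zero_div,
      mul_div_cancel_left₀ _ hlam0.ne', smul_eq_mul]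
    field_simp
    ring
  refine ⟨e1, e2, ?_⟩
  by_cases hI : (∫ x in (0:ℝ)..r, h x) = 0
  · rw [e1, e2, hI]
    simp
  · rw [e1, e2]
    field_simp
    ring
end
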